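/- arXiv:2509.08079 — 5 statements merged into one kernel-verified Lean document; each statement's English description precedes it below -/
import Mathlib

section
/- Let ε: (0,∞) → (0,∞) satisfy ε(σ) = O(σ^{−3/2}) as σ → ∞. Then, as σ → ∞, sup_{|l| ≤ ε(σ)} |f_L(l) − f_L(0)| = O(1), where f_L (which depends on σ) is the density of the log-likelihood ratio defined in the context. -/
open Set

private lemma mvt_abs {F F' : ℝ → ℝ} (hF : ∀ x, HasDerivAt F (F' x) x) {C a b : ℝ}
    (hC : ∀ x ∈ Set.uIcc a b, |F' x| ≤ C) : |F b - F a| ≤ C * |b - a| := by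
  have h := (convex_uIcc a b).norm_image_sub_le_of_norm_hasDerivWithin_le
    (fun x _ => (hF x).hasDerivWithinAt)
    (fun x hx => by simpa [Real.norm_eq_abs] using hC x hx)
    Set.left_mem_uIcc Set.right_mem_uIcc
  simpa [Real.norm_eq_abs] using h

private lemma mvt_lower {F F' : ℝ → ℝ} (hF : ∀ x, HasDerivAt F (F' x) x) {a b c : ℝ}
    (hab : a ≤ b) (hc : ∀ x ∈ Set.Icc a b, c ≤ F' x) : c * (b - a) ≤ F b - F a := by
  rcases eq_or_lt_of_le hab with rfl | h
  · simp
  · obtain ⟨x, hx, hx'⟩ := exists_hasDerivAt_eq_slope F F' h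
      (fun y _ => (hF y).continuousAt.continuousWithinAt) (fun y _ => hF y)
    have h1 : c ≤ (F b - F a) / (b - a) := by
      rw [← hx']; exact hc x ⟨hx.1.le, hx.2.le⟩
    have h2 : (0:ℝ) < b - a := sub_pos.mpr h
    calc c * (b - a) ≤ ((F b - F a) / (b - a)) * (b - a) :=
          mul_le_mul_of_nonneg_right h1 h2.le
      _ = F b - F a := div_mul_cancel₀ _ h2.ne'

private lemma deriv_neg_of_even {G : ℝ → ℝ} (hG : Differentiable ℝ G)
    (h : ∀ x, G (-x) = G x) : ∀ x, deriv G (-x) = -deriv G x := by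
  intro x
  have h1 : HasDerivAt (fun y : ℝ => G (-y)) (deriv G (-x) * (-1)) x :=
    ((hG (-x)).hasDerivAt).comp x (hasDerivAt_neg x)
  have h2 : (fun y : ℝ => G (-y)) = G := funext h
  rw [h2] at h1
  have h3 := h1.deriv
  linarith

private lemma deriv_even_of_odd {G : ℝ → ℝ} (hG : Differentiable ℝ G)
    (h : ∀ x, G (-x) = -G x) : ∀ x, deriv G (-x) = deriv G x := by
  intro x
  have h1 : HasDerivAt (fun y : ℝ => G (-y)) (deriv G (-x) * (-1)) x :=
    ((hG (-x)).hasDerivAt).comp x (hasDerivAt_neg x)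
  have h2 : (fun y : ℝ => G (-y)) = fun y => -G y := funext h
  rw [h2] at h1
  have h4 : HasDerivAt (fun y : ℝ => -G y) (-deriv G x) x := (hG x).hasDerivAt.neg
  have h5 := h1.unique h4
  linarith

private lemma abs_le_of_mem_uIcc {a b x r : ℝ} (ha : |a| ≤ r) (hb : |b| ≤ r)
    (hx : x ∈ Set.uIcc a b) : |x| ≤ r := by
  rw [Set.mem_uIcc] at hx
  rw [abs_le] at *
  rcases hx with ⟨h1, h2⟩ | ⟨h1, h2⟩ <;> constructor <;> linarith [ha.1, ha.2, hb.1, hb.2]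

private lemma bound_on_unit {h : ℝ → ℝ} (hc : Continuous h) :
    ∃ M : ℝ, 0 ≤ M ∧ ∀ x : ℝ, |x| ≤ 1 → |h x| ≤ M := by
  obtain ⟨M, hM⟩ := (isCompact_Icc (a := (-1:ℝ)) (b := 1)).exists_bound_of_continuousOn
    hc.continuousOn
  refine ⟨max M 0, le_max_right _ _, fun x hx => ?_⟩
  have h1 := hM x (by rw [Set.mem_Icc]; exact abs_le.mp hx)
  rw [Real.norm_eq_abs] at h1
  exact h1.trans (le_max_left _ _)

set_option maxHeartbeats 4000000 in
/-- If `ε(σ) = O(σ^{−3/2})` as `σ → ∞`, then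
`sup_{|l| ≤ ε(σ)} |f_L(l) − f_L(0)| = O(1)` as `σ → ∞`, where `f_L` is the density of
the log-likelihood ratio for a binary-input additive-noise channel whose noise has
density `f_N(x) = (1/σ) f₀(x/σ)` with `f₀` an even, strictly log-concave, `C⁴`
probability density satisfying `f₀(0) > 0` and `f₀''(0) < 0`. -/
theorem fL_flat_near_zero_bigO
    (f₀ : ℝ → ℝ)
    (hpos : ∀ x, 0 < f₀ x)
    (heven : ∀ x, f₀ (-x) = f₀ x)
    (hlogconc : StrictConcaveOn ℝ Set.univ (fun x => Real.log (f₀ x)))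
    (hC4 : ContDiff ℝ 4 f₀)
    (hdens : ∫ x : ℝ, f₀ x = 1)
    (h00 : 0 < f₀ 0)
    (h20 : iteratedDeriv 2 f₀ 0 < 0)
    (φ ψ : ℝ → ℝ → ℝ)
    (hφ : ∀ σ > (0:ℝ), ∀ y : ℝ,
      φ σ y = Real.log (f₀ ((y - 1) / σ)) - Real.log (f₀ ((y + 1) / σ)))
    (hψl : ∀ σ > (0:ℝ), Function.LeftInverse (ψ σ) (φ σ))
    (hψr : ∀ σ > (0:ℝ), Function.RightInverse (ψ σ) (φ σ))
    (fY : ℝ → ℝ → ℝ)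
    (hfY : ∀ σ > (0:ℝ), ∀ y : ℝ,
      fY σ y = ((1 / σ) * f₀ ((y - 1) / σ) + (1 / σ) * f₀ ((y + 1) / σ)) / 2)
    (fL : ℝ → ℝ → ℝ)
    (hfL : ∀ σ > (0:ℝ), ∀ l : ℝ,
      fL σ l = fY σ (ψ σ l) / deriv (φ σ) (ψ σ l))
    (ε : ℝ → ℝ)
    (hεpos : ∀ σ > (0:ℝ), 0 < ε σ)
    (hεO : ε =O[Filter.atTop] (fun σ : ℝ => σ ^ (-(3/2) : ℝ))) :
    ∃ C : ℝ, ∃ σ₀ : ℝ, ∀ σ ≥ σ₀, ∀ l : ℝ, |l| ≤ ε σ →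
      |fL σ l - fL σ 0| ≤ C := by
  -- ### Setup: g = log ∘ f₀ and its derivatives
  set g : ℝ → ℝ := fun x => Real.log (f₀ x) with hgdef
  have hFdiff : Differentiable ℝ f₀ := hC4.differentiable (by norm_num)
  have hgC : ContDiff ℝ 4 g := hC4.log (fun x => (hpos x).ne')
  set f1 : ℝ → ℝ := deriv f₀ with hf1def
  set f2 : ℝ → ℝ := deriv f1 with hf2def
  set g1 : ℝ → ℝ := deriv g with hg1def
  set g2 : ℝ → ℝ := deriv g1 with hg2def
  set g3 : ℝ → ℝ := deriv g2 with hg3def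
  set g4 : ℝ → ℝ := deriv g3 with hg4def
  have e4 : (4 : WithTop ℕ∞) = 3 + 1 := by norm_num
  have e3 : (3 : WithTop ℕ∞) = 2 + 1 := by norm_num
  have e2 : (2 : WithTop ℕ∞) = 1 + 1 := by norm_num
  have hf1C : ContDiff ℝ 3 f1 := by
    rw [e4] at hC4; exact (contDiff_succ_iff_deriv.mp hC4).2.2
  have hf2C : ContDiff ℝ 2 f2 := by
    rw [e3] at hf1C; exact (contDiff_succ_iff_deriv.mp hf1C).2.2
  have hg1C : ContDiff ℝ 3 g1 := by
    rw [e4] at hgC; exact (contDiff_succ_iff_deriv.mp hgC).2.2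
  have hg2C : ContDiff ℝ 2 g2 := by
    rw [e3] at hg1C; exact (contDiff_succ_iff_deriv.mp hg1C).2.2
  have hg3C : ContDiff ℝ 1 g3 := by
    rw [e2] at hg2C; exact (contDiff_succ_iff_deriv.mp hg2C).2.2
  have hgdiff : Differentiable ℝ g := hgC.differentiable (by norm_num)
  have hg1diff : Differentiable ℝ g1 := hg1C.differentiable (by norm_num)
  have hg2diff : Differentiable ℝ g2 := hg2C.differentiable (by norm_num)
  have hg3diff : Differentiable ℝ g3 := hg3C.differentiable one_ne_zero
  have hf1diff : Differentiable ℝ f1 := hf1C.differentiable (by norm_num)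
  have hgD : ∀ x, HasDerivAt g (g1 x) x := fun x => (hgdiff x).hasDerivAt
  have hg1D : ∀ x, HasDerivAt g1 (g2 x) x := fun x => (hg1diff x).hasDerivAt
  have hg2D : ∀ x, HasDerivAt g2 (g3 x) x := fun x => (hg2diff x).hasDerivAt
  have hg3D : ∀ x, HasDerivAt g3 (g4 x) x := fun x => (hg3diff x).hasDerivAt
  have hfD : ∀ x, HasDerivAt f₀ (f1 x) x := fun x => (hFdiff x).hasDerivAt
  have hf1D : ∀ x, HasDerivAt f1 (f2 x) x := fun x => (hf1diff x).hasDerivAt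
  -- continuity for bounds (extract before clearing values)
  have hf0cont : Continuous f₀ := hC4.continuous
  have hf1cont : Continuous f1 := hf1C.continuous
  have hf2cont : Continuous f2 := hf2C.continuous
  have hg2cont : Continuous g2 := hg2C.continuous
  have hg3cont : Continuous g3 := hg3C.continuous
  have hg4cont : Continuous g4 := hg3C.continuous_deriv (le_refl 1)
  -- φ in terms of g
  have hφg : ∀ σ > (0:ℝ), ∀ w : ℝ, φ σ w = g ((w - 1) / σ) - g ((w + 1) / σ) := by
    intro σ hσ w; rw [hφ σ hσ w]
  -- evenness / oddness
  have hgeven : ∀ x, g (-x) = g x := by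
    intro x; show Real.log (f₀ (-x)) = Real.log (f₀ x); rw [heven]
  have hg1odd : ∀ x, g1 (-x) = -g1 x := deriv_neg_of_even hgdiff hgeven
  have hg2even : ∀ x, g2 (-x) = g2 x := deriv_even_of_odd hg1diff hg1odd
  have hg3odd : ∀ x, g3 (-x) = -g3 x := deriv_neg_of_even hg2diff hg2even
  have hg30 : g3 0 = 0 := by have := hg3odd 0; rw [neg_zero] at this; linarith
  have hf1odd : ∀ x, f1 (-x) = -f1 x := deriv_neg_of_even hFdiff heven
  have hf10 : f1 0 = 0 := by have := hf1odd 0; rw [neg_zero] at this; linarith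
  -- antitone derivative from concavity
  have hg1anti : Antitone g1 := by
    have h := ConcaveOn.antitoneOn_deriv hlogconc.concaveOn (fun x _ => hgdiff x)
    exact antitoneOn_univ.mp h
  -- second derivative at 0
  have hg1eq : g1 = fun x => f1 x / f₀ x := by
    funext x
    exact ((hFdiff x).hasDerivAt.log (hpos x).ne').deriv
  have hf20 : f2 0 < 0 := by
    rw [show (2:ℕ) = 1 + 1 from rfl, iteratedDeriv_succ, iteratedDeriv_one] at h20
    exact h20
  have hg20eq : g2 0 = f2 0 / f₀ 0 := by
    have hD : HasDerivAt (fun x => f1 x / f₀ x)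
        ((f2 0 * f₀ 0 - f1 0 * f1 0) / (f₀ 0) ^ 2) 0 :=
      (hf1diff 0).hasDerivAt.div (hFdiff 0).hasDerivAt (hpos 0).ne'
    have h1 : g2 0 = (f2 0 * f₀ 0 - f1 0 * f1 0) / (f₀ 0) ^ 2 := by
      rw [hg2def, hg1eq]; exact hD.deriv
    rw [h1, hf10]
    field_simp
    ring
  have hg20neg : g2 0 < 0 := by rw [hg20eq]; exact div_neg_of_neg_of_pos hf20 h00
  -- from now on the derivatives are opaque
  clear_value g g1 g2 g3 g4 f1 f2
  set m : ℝ := -g2 0 / 2 with hmdef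
  have hm : 0 < m := by rw [hmdef]; linarith
  have hg20m : g2 0 = -(2 * m) := by rw [hmdef]; ring
  -- choice of δ
  obtain ⟨δ', hδ'pos, hδ'⟩ := Metric.continuousAt_iff.mp hg2cont.continuousAt m hm
  set δ : ℝ := min (δ' / 2) 1 with hδdef
  have hδpos : 0 < δ := lt_min (by linarith) one_pos
  have hδ1 : δ ≤ 1 := min_le_right _ _
  have hg2small : ∀ x : ℝ, |x| ≤ δ → g2 x ≤ -m := by
    intro x hx
    have h1 : dist x 0 < δ' := by
      rw [Real.dist_eq, sub_zero]
      have h2 : δ ≤ δ' / 2 := min_le_left _ _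
      have h3 := (abs_nonneg x).trans hx
      calc |x| ≤ δ := hx
        _ ≤ δ' / 2 := h2
        _ < δ' := by linarith
    have h2 := hδ' h1
    rw [Real.dist_eq] at h2
    have h3 := abs_lt.mp h2
    linarith [h3.2, hg20m]
  clear_value m δ
  -- bounds on [-1,1]
  obtain ⟨M₀, hM₀0, hM₀⟩ := bound_on_unit hf0cont
  obtain ⟨M₁, hM₁0, hM₁⟩ := bound_on_unit hf1cont
  obtain ⟨M₂, hM₂0, hM₂⟩ := bound_on_unit hf2cont
  obtain ⟨N₂, hN₂0, hN₂⟩ := bound_on_unit hg2cont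
  obtain ⟨N₃, hN₃0, hN₃⟩ := bound_on_unit hg3cont
  obtain ⟨N₄, hN₄0, hN₄⟩ := bound_on_unit hg4cont
  set L : ℝ := f₀ 0 * N₄ + M₂ * (2 * m) with hLdef
  have hL0 : 0 ≤ L := by
    have h1 : 0 ≤ f₀ 0 * N₄ := mul_nonneg (hpos 0).le hN₄0
    have h2 : 0 ≤ M₂ * (2 * m) := mul_nonneg hM₂0 (by linarith)
    rw [hLdef]; linarith
  -- big-O data
  rw [Asymptotics.isBigO_iff] at hεO
  obtain ⟨c, hc⟩ := hεO
  rw [Filter.eventually_atTop] at hc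
  obtain ⟨σ₁, hσ₁⟩ := hc
  set A : ℝ := max c 1 with hAdef
  have hA1 : (1:ℝ) ≤ A := le_max_right _ _
  have hApos : (0:ℝ) < A := by linarith
  have hcA : c ≤ A := le_max_left _ _
  clear_value A
  -- constants
  set K : ℝ := 4 * L * (A / (2 * m)) ^ 2 + 8 * M₀ * N₃ + 8 * M₁ * (N₂ + N₃) with hKdef
  set C : ℝ := K / (8 * m ^ 2) with hCdef
  set σ₀ : ℝ := max (max σ₁ (2 / δ)) (max 2 ((A / (m * δ)) ^ 2 + 4)) with hσ₀def
  clear_value L K C σ₀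
  refine ⟨C, σ₀, ?_⟩
  intro σ hσ l hl
  rw [hσ₀def] at hσ
  -- basic facts about σ
  have hσσ₁ : σ₁ ≤ σ := le_trans (le_trans (le_max_left _ _) (le_max_left _ _)) hσ
  have hσδ : 2 / δ ≤ σ := le_trans (le_trans (le_max_right _ _) (le_max_left _ _)) hσ
  have hσ2 : (2:ℝ) ≤ σ := le_trans (le_trans (le_max_left _ _) (le_max_right _ _)) hσ
  have hσA : (A / (m * δ)) ^ 2 + 4 ≤ σ :=
    le_trans (le_trans (le_max_right _ _) (le_max_right _ _)) hσ
  have hσpos : (0:ℝ) < σ := by linarith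
  have hσ1 : (1:ℝ) ≤ σ := by linarith
  set t : ℝ := 1 / σ with htdef
  have htpos : 0 < t := htdef ▸ one_div_pos.mpr hσpos
  have ht1 : t ≤ 1 := by
    rw [htdef, div_le_one hσpos]; linarith
  have htδ : t ≤ δ / 2 := by
    rw [htdef, div_le_div_iff₀ hσpos (by norm_num : (0:ℝ) < 2)]
    calc (1:ℝ) * 2 = 2 := by ring
      _ = (2 / δ) * δ := by field_simp
      _ ≤ σ * δ := mul_le_mul_of_nonneg_right hσδ hδpos.le
      _ = δ * σ := mul_comm σ δ
  clear_value t
  have hsqrtpos : 0 < Real.sqrt σ := Real.sqrt_pos.mpr hσpos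
  -- ε bound
  have hεle : ε σ ≤ A * t / Real.sqrt σ := by
    have h1 := hσ₁ σ hσσ₁
    have h2 : σ ^ (-(3/2) : ℝ) = t / Real.sqrt σ := by
      rw [Real.rpow_neg hσpos.le]
      rw [show (3/2 : ℝ) = 1 + 1/2 by norm_num, Real.rpow_add hσpos, Real.rpow_one,
        ← Real.sqrt_eq_rpow]
      rw [htdef]
      rw [mul_inv, one_div, div_eq_mul_inv]
    have h3 : (0:ℝ) < t / Real.sqrt σ := div_pos htpos hsqrtpos
    rw [Real.norm_eq_abs, Real.norm_eq_abs, h2, abs_of_pos (hεpos σ hσpos),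
      abs_of_pos h3] at h1
    calc ε σ ≤ c * (t / Real.sqrt σ) := h1
      _ ≤ A * (t / Real.sqrt σ) := mul_le_mul_of_nonneg_right hcA h3.le
      _ = A * t / Real.sqrt σ := by ring
  have hσA' : A / Real.sqrt σ < m * δ := by
    have h0 : (0:ℝ) < m * δ := mul_pos hm hδpos
    have h1 : A / (m * δ) < Real.sqrt σ := by
      rw [Real.lt_sqrt (div_nonneg hApos.le h0.le)]
      linarith
    rw [div_lt_iff₀ hsqrtpos]
    rw [div_lt_iff₀ h0] at h1
    linarith [h1]
  -- the point y and its scaled version u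
  set y : ℝ := ψ σ l with hydef
  set u : ℝ := y / σ with hudef
  clear_value y u
  have ha : (y - 1) / σ = u - t := by rw [hudef, htdef]; exact sub_div y 1 σ
  have hb : (y + 1) / σ = u + t := by rw [hudef, htdef]; exact add_div y 1 σ
  have hly : φ σ y = l := by rw [hydef]; exact hψr σ hσpos l
  have hq : g (u - t) - g (u + t) = l := by
    rw [← ha, ← hb, ← hly, hφg σ hσpos y]
  -- derivative of φ σ
  have hφD : ∀ z : ℝ, HasDerivAt (φ σ) ((g1 ((z - 1) / σ) - g1 ((z + 1) / σ)) * (1 / σ)) z := by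
    intro z
    have h1 : HasDerivAt (fun w : ℝ => (w - 1) / σ) (1 / σ) z := by
      have := ((hasDerivAt_id z).sub_const (1:ℝ)).div_const σ
      simpa using this
    have h2 : HasDerivAt (fun w : ℝ => (w + 1) / σ) (1 / σ) z := by
      have := ((hasDerivAt_id z).add_const (1:ℝ)).div_const σ
      simpa using this
    have h3 : HasDerivAt (fun w : ℝ => g ((w - 1) / σ)) (g1 ((z - 1) / σ) * (1 / σ)) z :=
      (hgD ((z - 1) / σ)).comp z h1
    have h4 : HasDerivAt (fun w : ℝ => g ((w + 1) / σ)) (g1 ((z + 1) / σ) * (1 / σ)) z :=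
      (hgD ((z + 1) / σ)).comp z h2
    have h5 : HasDerivAt (fun w : ℝ => g ((w - 1) / σ) - g ((w + 1) / σ))
        (g1 ((z - 1) / σ) * (1 / σ) - g1 ((z + 1) / σ) * (1 / σ)) z := h3.sub h4
    have h6 : (fun w : ℝ => g ((w - 1) / σ) - g ((w + 1) / σ)) = φ σ :=
      funext fun w => (hφg σ hσpos w).symm
    rw [h6] at h5
    convert h5 using 1
    ring
  -- lower bound machinery for Q
  have hQnonneg : ∀ v : ℝ, 0 ≤ g1 (v - t) - g1 (v + t) := by
    intro v; exact sub_nonneg.mpr (hg1anti (by linarith))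
  have hQlow : ∀ v : ℝ, -δ ≤ v - t → v + t ≤ δ → 2 * (m * t) ≤ g1 (v - t) - g1 (v + t) := by
    intro v h1 h2
    have h3 := mvt_lower (F := fun x => -g1 x) (F' := fun x => -g2 x)
      (fun x => (hg1D x).neg) (show v - t ≤ v + t by linarith) (c := m) ?_
    · have h3' : m * ((v + t) - (v - t)) ≤ -g1 (v + t) - -g1 (v - t) := h3
      have h4 : m * ((v + t) - (v - t)) = 2 * (m * t) := by ring
      linarith [h3', h4]
    · intro x hx
      show m ≤ -g2 x
      have hxδ : |x| ≤ δ := abs_le.mpr ⟨by linarith [hx.1], by linarith [hx.2]⟩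
      linarith [hg2small x hxδ]
  -- q and its derivative
  have hqD : ∀ v : ℝ, HasDerivAt (fun w : ℝ => g (w - t) - g (w + t))
      (g1 (v - t) - g1 (v + t)) v := by
    intro v
    have h1 : HasDerivAt (fun w : ℝ => w - t) 1 v := by
      simpa using (hasDerivAt_id v).sub_const t
    have h2 : HasDerivAt (fun w : ℝ => w + t) 1 v := by
      simpa using (hasDerivAt_id v).add_const t
    have h3 : HasDerivAt (fun w : ℝ => g (w - t)) (g1 (v - t) * 1) v :=
      (hgD (v - t)).comp v h1
    have h4 : HasDerivAt (fun w : ℝ => g (w + t)) (g1 (v + t) * 1) v :=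
      (hgD (v + t)).comp v h2
    have h5 : HasDerivAt (fun w : ℝ => g (w - t) - g (w + t))
        (g1 (v - t) * 1 - g1 (v + t) * 1) v := h3.sub h4
    simpa using h5
  have hq0 : g (0 - t) - g (0 + t) = 0 := by
    have h1 : (0:ℝ) - t = -(0 + t) := by ring
    rw [h1, hgeven]
    ring
  have hqabs : g (|u| - t) - g (|u| + t) ≤ |l| := by
    rcases abs_cases u with ⟨h1, _⟩ | ⟨h1, _⟩
    · rw [h1, hq]; exact le_abs_self l
    · rw [h1]
      have h2 : -u - t = -(u + t) := by ring
      have h3 : -u + t = -(u - t) := by ring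
      rw [h2, h3, hgeven, hgeven]
      have h4 : g (u + t) - g (u - t) = -l := by rw [← hq]; ring
      rw [h4]
      exact neg_le_abs l
  -- localization: |u| ≤ A / (2 m √σ)
  have hw : |u| ≤ A / (2 * m * Real.sqrt σ) := by
    by_cases hcase : |u| ≤ δ - t
    · have h1 := mvt_lower hqD (show (0:ℝ) ≤ |u| from abs_nonneg u) (c := 2 * (m * t))
        (fun x hx => hQlow x (by linarith [hx.1, htpos.le]) (by linarith [hx.2, hcase]))
      have h1' : 2 * (m * t) * (|u| - 0) ≤
          (g (|u| - t) - g (|u| + t)) - (g (0 - t) - g (0 + t)) := h1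
      rw [hq0, sub_zero, sub_zero] at h1'
      have h2 : 2 * (m * t) * |u| ≤ A * t / Real.sqrt σ :=
        le_trans h1' (le_trans hqabs (le_trans hl hεle))
      have he1 : A * t / Real.sqrt σ = (A / Real.sqrt σ) * t := by ring
      have he2 : 2 * (m * t) * |u| = (2 * m * |u|) * t := by ring
      have h4 : 2 * m * |u| ≤ A / Real.sqrt σ := by
        apply le_of_mul_le_mul_right _ htpos
        rw [← he2, ← he1]
        exact h2
      rw [le_div_iff₀ (mul_pos (mul_pos two_pos hm) hsqrtpos)]
      calc |u| * (2 * m * Real.sqrt σ) = (2 * m * |u|) * Real.sqrt σ := by ring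
        _ ≤ (A / Real.sqrt σ) * Real.sqrt σ := mul_le_mul_of_nonneg_right h4 hsqrtpos.le
        _ = A := div_mul_cancel₀ A hsqrtpos.ne'
    · exfalso
      push_neg at hcase
      have hδt : (0:ℝ) ≤ δ - t := by linarith
      have h1 := mvt_lower hqD hcase.le (c := (0:ℝ)) (fun x _ => hQnonneg x)
      have h1' : 0 * (|u| - (δ - t)) ≤
          (g (|u| - t) - g (|u| + t)) - (g ((δ - t) - t) - g ((δ - t) + t)) := h1
      have h2 := mvt_lower hqD hδt (c := 2 * (m * t))
        (fun x hx => hQlow x (by linarith [hx.1, htpos.le]) (by linarith [hx.2]))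
      have h2' : 2 * (m * t) * ((δ - t) - 0) ≤
          (g ((δ - t) - t) - g ((δ - t) + t)) - (g (0 - t) - g (0 + t)) := h2
      rw [hq0, sub_zero, sub_zero] at h2'
      have h3 : m * t * δ ≤ g (|u| - t) - g (|u| + t) := by
        rw [zero_mul] at h1'
        have h4 : 2 * (m * t) * ((δ - t) - 0) = m * t * δ + m * t * (δ - 2 * t) := by ring
        have h5 : 0 ≤ m * t * (δ - 2 * t) :=
          mul_nonneg (mul_pos hm htpos).le (by linarith)
        linarith [h1', h2', h5, h4]
      have h5 : g (|u| - t) - g (|u| + t) ≤ A * t / Real.sqrt σ :=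
        le_trans hqabs (le_trans hl hεle)
      have h6 : A * t / Real.sqrt σ < (m * δ) * t := by
        have h7 : A * t / Real.sqrt σ = (A / Real.sqrt σ) * t := by ring
        rw [h7]
        exact mul_lt_mul_of_pos_right hσA' htpos
      have h8 : (m * δ) * t = m * t * δ := by ring
      linarith [h3, h5, h6, h8]
  have huδ : |u| ≤ δ / 2 := by
    have h1 : A / (2 * m * Real.sqrt σ) ≤ δ / 2 := by
      rw [div_le_div_iff₀ (mul_pos (mul_pos two_pos hm) hsqrtpos) (by norm_num : (0:ℝ) < 2)]
      have h2 : A < m * δ * Real.sqrt σ := by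
        rw [div_lt_iff₀ hsqrtpos] at hσA'
        linarith
      have h3 : δ * (2 * m * Real.sqrt σ) = 2 * (m * δ * Real.sqrt σ) := by ring
      linarith [h2, h3]
    linarith [hw]
  have hu2 : u ^ 2 ≤ (A / (2 * m)) ^ 2 * t := by
    have h1 : |u| ^ 2 ≤ (A / (2 * m * Real.sqrt σ)) ^ 2 :=
      pow_le_pow_left₀ (abs_nonneg u) hw 2
    rw [sq_abs] at h1
    have hs2 : Real.sqrt σ ^ 2 = σ := Real.sq_sqrt hσpos.le
    have h2 : (A / (2 * m * Real.sqrt σ)) ^ 2 = (A / (2 * m)) ^ 2 * t := by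
      rw [htdef, div_pow, div_pow, mul_pow, mul_pow, hs2]
      rw [mul_one_div, div_div]
    rw [h2] at h1
    exact h1
  -- abs bounds for the relevant points
  have habs_u : |u| ≤ δ := by linarith [huδ]
  -- main quantities
  set Pu : ℝ := f₀ (u - t) + f₀ (u + t) with hPudef
  set P0 : ℝ := f₀ (0 - t) + f₀ (0 + t) with hP0def
  set Qu : ℝ := g1 (u - t) - g1 (u + t) with hQudef
  set Q0 : ℝ := g1 (0 - t) - g1 (0 + t) with hQ0def
  have hQu : 2 * (m * t) ≤ Qu := by
    rw [hQudef]
    exact hQlow u (by rw [abs_le] at huδ; linarith [huδ.1, htδ])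
      (by rw [abs_le] at huδ; linarith [huδ.2, htδ])
  have hQ0 : 2 * (m * t) ≤ Q0 := by
    rw [hQ0def]
    exact hQlow 0 (by rw [zero_sub]; linarith [htδ]) (by rw [zero_add]; linarith [htδ])
  clear_value Pu P0 Qu Q0
  have hQupos : 0 < Qu := lt_of_lt_of_le (mul_pos two_pos (mul_pos hm htpos)) hQu
  have hQ0pos : 0 < Q0 := lt_of_lt_of_le (mul_pos two_pos (mul_pos hm htpos)) hQ0
  -- φ σ 0 = 0, ψ σ 0 = 0
  have hφ0 : φ σ 0 = 0 := by
    rw [hφg σ hσpos 0]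
    have h1 : ((0:ℝ) - 1) / σ = -((0 + 1) / σ) := by ring
    rw [h1, hgeven]
    ring
  have hψ0 : ψ σ 0 = 0 := by
    have h1 := hψl σ hσpos 0
    rw [hφ0] at h1
    exact h1
  -- values of fL
  have ha0 : ((0:ℝ) - 1) / σ = 0 - t := by rw [htdef, sub_div, zero_div]
  have hb0 : ((0:ℝ) + 1) / σ = 0 + t := by rw [htdef, add_div, zero_div]
  have hdy : deriv (φ σ) y = Qu * t := by
    rw [(hφD y).deriv, ha, hb, hQudef, htdef]
  have hd0 : deriv (φ σ) 0 = Q0 * t := by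
    rw [(hφD 0).deriv, ha0, hb0, hQ0def, htdef]
  have hQtne : Qu * t ≠ 0 := (mul_pos hQupos htpos).ne'
  have hQ0tne : Q0 * t ≠ 0 := (mul_pos hQ0pos htpos).ne'
  have hfLl : fL σ l = Pu / (2 * Qu) := by
    rw [hfL σ hσpos l, ← hydef, hfY σ hσpos y, ha, hb, hdy, hPudef, ← htdef]
    rw [div_div]
    rw [div_eq_div_iff (by exact mul_ne_zero two_ne_zero hQtne) (by positivity)]
    ring
  have hfL0 : fL σ 0 = P0 / (2 * Q0) := by
    rw [hfL σ hσpos 0, hψ0, hfY σ hσpos 0, ha0, hb0, hd0, hP0def, ← htdef]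
    rw [div_div]
    rw [div_eq_div_iff (by exact mul_ne_zero two_ne_zero hQ0tne) (by positivity)]
    ring
  have hdiffeq : fL σ l - fL σ 0 = (Pu * Q0 - P0 * Qu) / (2 * (Qu * Q0)) := by
    rw [hfLl, hfL0, div_sub_div _ _ (by positivity) (by positivity)]
    rw [div_eq_div_iff (by positivity) (by positivity)]
    ring
  -- remainder estimates
  have hg2lip : ∀ x₁ x₂ : ℝ, |x₁| ≤ δ → |x₂| ≤ δ → |g2 x₂ - g2 x₁| ≤ N₃ * |x₂ - x₁| := by
    intro x₁ x₂ h1 h2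
    exact mvt_abs hg2D (fun x hx => hN₃ x (le_trans (abs_le_of_mem_uIcc h1 h2 hx) hδ1))
  have hRQ : ∀ v : ℝ, |v| ≤ δ / 2 →
      |g1 (v - t) - g1 (v + t) + (2 * g2 v) * t| ≤ 2 * N₃ * t * t := by
    intro v hv
    have hvδ : |v| ≤ δ := by linarith
    have hHD : ∀ s : ℝ, HasDerivAt (fun s : ℝ => g1 (v - s) - g1 (v + s) + (2 * g2 v) * s)
        (-(g2 (v - s)) - g2 (v + s) + 2 * g2 v) s := by
      intro s
      have h1 : HasDerivAt (fun s : ℝ => v - s) (-1) s := by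
        simpa using (hasDerivAt_id s).const_sub v
      have h2 : HasDerivAt (fun s : ℝ => v + s) 1 s := by
        simpa using (hasDerivAt_id s).const_add v
      have h3 : HasDerivAt (fun s : ℝ => g1 (v - s)) (g2 (v - s) * (-1)) s :=
        (hg1D (v - s)).comp s h1
      have h4 : HasDerivAt (fun s : ℝ => g1 (v + s)) (g2 (v + s) * 1) s :=
        (hg1D (v + s)).comp s h2
      have h5 : HasDerivAt (fun s : ℝ => (2 * g2 v) * s) (2 * g2 v) s := by
        simpa using (hasDerivAt_id s).const_mul (2 * g2 v)
      have h6 : HasDerivAt (fun s : ℝ => g1 (v - s) - g1 (v + s) + (2 * g2 v) * s)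
          (g2 (v - s) * (-1) - g2 (v + s) * 1 + 2 * g2 v) s := (h3.sub h4).add h5
      convert h6 using 1
      ring
    have hbnd : ∀ s ∈ Set.uIcc (0:ℝ) t,
        |(fun s : ℝ => -(g2 (v - s)) - g2 (v + s) + 2 * g2 v) s| ≤ 2 * N₃ * t := by
      intro s hs
      show |-(g2 (v - s)) - g2 (v + s) + 2 * g2 v| ≤ 2 * N₃ * t
      rw [Set.uIcc_of_le htpos.le, Set.mem_Icc] at hs
      have hv' := abs_le.mp hv
      have hs1 : |v - s| ≤ δ := by
        rw [abs_le]
        constructor <;> [linarith [hv'.1, hs.2, htδ]; linarith [hv'.2, hs.1]]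
      have hs2 : |v + s| ≤ δ := by
        rw [abs_le]
        constructor <;> [linarith [hv'.1, hs.1]; linarith [hv'.2, hs.2, htδ]]
      have e1 : |g2 (v - s) - g2 v| ≤ N₃ * s := by
        have hh := hg2lip v (v - s) hvδ hs1
        have h9 : |v - s - v| = s := by
          rw [show v - s - v = -s by ring, abs_neg, abs_of_nonneg hs.1]
        rw [h9] at hh
        exact hh
      have e2 : |g2 (v + s) - g2 v| ≤ N₃ * s := by
        have hh := hg2lip v (v + s) hvδ hs2
        have h9 : |v + s - v| = s := by
          rw [show v + s - v = s by ring, abs_of_nonneg hs.1]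
        rw [h9] at hh
        exact hh
      have h10 : -(g2 (v - s)) - g2 (v + s) + 2 * g2 v
          = -((g2 (v - s) - g2 v) + (g2 (v + s) - g2 v)) := by ring
      rw [h10, abs_neg]
      calc |(g2 (v - s) - g2 v) + (g2 (v + s) - g2 v)|
          ≤ |g2 (v - s) - g2 v| + |g2 (v + s) - g2 v| := abs_add_le _ _
        _ ≤ N₃ * s + N₃ * s := add_le_add e1 e2
        _ ≤ 2 * N₃ * t := by linarith [mul_nonneg hN₃0 (sub_nonneg.mpr hs.2)]
    have hkey : |(g1 (v - t) - g1 (v + t) + (2 * g2 v) * t)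
        - (g1 (v - 0) - g1 (v + 0) + (2 * g2 v) * 0)| ≤ 2 * N₃ * t * |t - 0| :=
      mvt_abs hHD hbnd
    have hz : g1 (v - 0) - g1 (v + 0) + (2 * g2 v) * 0 = 0 := by simp
    rw [hz, sub_zero, sub_zero, abs_of_pos htpos] at hkey
    exact hkey
  have hRP : ∀ v : ℝ, |v| ≤ δ / 2 →
      |f₀ (v - t) + f₀ (v + t) - 2 * f₀ v| ≤ 2 * M₁ * t := by
    intro v hv
    have hvδ : |v| ≤ δ := by linarith
    have hv' := abs_le.mp hv
    have hs1 : |v - t| ≤ δ := by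
      rw [abs_le]
      constructor <;> [linarith [hv'.1, htδ]; linarith [hv'.2, htpos.le]]
    have hs2 : |v + t| ≤ δ := by
      rw [abs_le]
      constructor <;> [linarith [hv'.1, htpos.le]; linarith [hv'.2, htδ]]
    have e1 : |f₀ (v - t) - f₀ v| ≤ M₁ * t := by
      have hh := mvt_abs hfD (C := M₁) (a := v) (b := v - t)
        (fun x hx => hM₁ x (le_trans (abs_le_of_mem_uIcc hvδ hs1 hx) hδ1))
      have h9 : |v - t - v| = t := by
        rw [show v - t - v = -t by ring, abs_neg, abs_of_pos htpos]
      rw [h9] at hh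
      exact hh
    have e2 : |f₀ (v + t) - f₀ v| ≤ M₁ * t := by
      have hh := mvt_abs hfD (C := M₁) (a := v) (b := v + t)
        (fun x hx => hM₁ x (le_trans (abs_le_of_mem_uIcc hvδ hs2 hx) hδ1))
      have h9 : |v + t - v| = t := by
        rw [show v + t - v = t by ring, abs_of_pos htpos]
      rw [h9] at hh
      exact hh
    have h10 : f₀ (v - t) + f₀ (v + t) - 2 * f₀ v
        = (f₀ (v - t) - f₀ v) + (f₀ (v + t) - f₀ v) := by ring
    rw [h10]
    calc |(f₀ (v - t) - f₀ v) + (f₀ (v + t) - f₀ v)|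
        ≤ |f₀ (v - t) - f₀ v| + |f₀ (v + t) - f₀ v| := abs_add_le _ _
      _ ≤ M₁ * t + M₁ * t := add_le_add e1 e2
      _ = 2 * M₁ * t := by ring
  -- the core cancellation: |f₀ 0 * g2 u - f₀ u * g2 0| ≤ L u²
  have hg20abs : |g2 0| = 2 * m := by
    rw [hg20m, abs_neg, abs_of_pos (by linarith : (0:ℝ) < 2 * m)]
  have hk'bound : ∀ v : ℝ, |v| ≤ δ → |f₀ 0 * g3 v - f1 v * g2 0| ≤ L * |v| := by
    intro v hv
    have hk'D : ∀ x : ℝ, HasDerivAt (fun x => f₀ 0 * g3 x - f1 x * g2 0)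
        (f₀ 0 * g4 x - f2 x * g2 0) x := by
      intro x
      exact ((hg3D x).const_mul (f₀ 0)).sub ((hf1D x).mul_const (g2 0))
    have hbnd : ∀ x ∈ Set.uIcc (0:ℝ) v,
        |(fun x : ℝ => f₀ 0 * g4 x - f2 x * g2 0) x| ≤ L := by
      intro x hx
      show |f₀ 0 * g4 x - f2 x * g2 0| ≤ L
      have hxv : |x| ≤ |v| := abs_le_of_mem_uIcc (by simp) (le_refl _) hx
      have hx1 : |x| ≤ 1 := le_trans hxv (le_trans hv hδ1)
      calc |f₀ 0 * g4 x - f2 x * g2 0| ≤ |f₀ 0 * g4 x| + |f2 x * g2 0| := abs_sub _ _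
        _ = |f₀ 0| * |g4 x| + |f2 x| * |g2 0| := by rw [abs_mul, abs_mul]
        _ ≤ f₀ 0 * N₄ + M₂ * (2 * m) := by
            rw [abs_of_pos h00, hg20abs]
            exact add_le_add (mul_le_mul_of_nonneg_left (hN₄ x hx1) h00.le)
              (mul_le_mul_of_nonneg_right (hM₂ x hx1) (by linarith))
        _ = L := by rw [hLdef]
    have h1 : |(f₀ 0 * g3 v - f1 v * g2 0) - (f₀ 0 * g3 0 - f1 0 * g2 0)|
        ≤ L * |v - 0| := mvt_abs hk'D hbnd
    have h2 : f₀ 0 * g3 0 - f1 0 * g2 0 = 0 := by rw [hg30, hf10]; ring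
    rw [h2, sub_zero, sub_zero] at h1
    exact h1
  have hk : |f₀ 0 * g2 u - f₀ u * g2 0| ≤ L * u ^ 2 := by
    have hkD : ∀ x : ℝ, HasDerivAt (fun x => f₀ 0 * g2 x - f₀ x * g2 0)
        (f₀ 0 * g3 x - f1 x * g2 0) x := by
      intro x
      exact ((hg2D x).const_mul (f₀ 0)).sub ((hfD x).mul_const (g2 0))
    have hbnd : ∀ x ∈ Set.uIcc (0:ℝ) u,
        |(fun x : ℝ => f₀ 0 * g3 x - f1 x * g2 0) x| ≤ L * |u| := by
      intro x hx
      show |f₀ 0 * g3 x - f1 x * g2 0| ≤ L * |u|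
      have hxv : |x| ≤ |u| := abs_le_of_mem_uIcc (by simp) (le_refl _) hx
      have hxδ : |x| ≤ δ := le_trans hxv habs_u
      calc |f₀ 0 * g3 x - f1 x * g2 0| ≤ L * |x| := hk'bound x hxδ
        _ ≤ L * |u| := mul_le_mul_of_nonneg_left hxv hL0
    have h1 : |(f₀ 0 * g2 u - f₀ u * g2 0) - (f₀ 0 * g2 0 - f₀ 0 * g2 0)|
        ≤ L * |u| * |u - 0| := mvt_abs hkD hbnd
    rw [sub_self, sub_zero, sub_zero] at h1
    calc |f₀ 0 * g2 u - f₀ u * g2 0| ≤ L * |u| * |u| := h1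
      _ = L * u ^ 2 := by rw [mul_assoc, abs_mul_abs_self, sq]
  -- decomposition of the numerator
  set ru : ℝ := Qu + (2 * g2 u) * t with hrudef
  set r0 : ℝ := Q0 + (2 * g2 0) * t with hr0def
  set pu : ℝ := Pu - 2 * f₀ u with hpudef
  set p0 : ℝ := P0 - 2 * f₀ 0 with hp0def
  clear_value ru r0 pu p0
  have hru : |ru| ≤ 2 * N₃ * t * t := by
    rw [hrudef, hQudef]; exact hRQ u huδ
  have hr0 : |r0| ≤ 2 * N₃ * t * t := by
    rw [hr0def, hQ0def]; exact hRQ 0 (by rw [abs_zero]; linarith)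
  have hpu : |pu| ≤ 2 * M₁ * t := by
    rw [hpudef, hPudef]; exact hRP u huδ
  have hp0 : |p0| ≤ 2 * M₁ * t := by
    rw [hp0def, hP0def]; exact hRP 0 (by rw [abs_zero]; linarith)
  have hg2uabs : |g2 u| ≤ N₂ := hN₂ u (le_trans habs_u hδ1)
  have hg20abs' : |g2 0| ≤ N₂ := hN₂ 0 (by rw [abs_zero]; norm_num)
  have hQuabs : |Qu| ≤ 2 * (N₂ + N₃) * t := by
    have h1 : Qu = -(2 * g2 u) * t + ru := by rw [hrudef]; ring
    rw [h1]
    calc |(-(2 * g2 u)) * t + ru| ≤ |(-(2 * g2 u)) * t| + |ru| := abs_add_le _ _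
      _ = 2 * |g2 u| * t + |ru| := by
          rw [abs_mul, abs_neg, abs_mul, abs_of_pos htpos,
            abs_of_pos (by norm_num : (0:ℝ) < 2)]
      _ ≤ 2 * N₂ * t + 2 * N₃ * t * t := by
          have := mul_le_mul_of_nonneg_right (mul_le_mul_of_nonneg_left hg2uabs
            (by norm_num : (0:ℝ) ≤ 2)) htpos.le
          linarith [hru]
      _ ≤ 2 * (N₂ + N₃) * t := by
          linarith [mul_nonneg (mul_nonneg hN₃0 htpos.le) (sub_nonneg.mpr ht1)]
  have hQ0abs : |Q0| ≤ 2 * (N₂ + N₃) * t := by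
    have h1 : Q0 = -(2 * g2 0) * t + r0 := by rw [hr0def]; ring
    rw [h1]
    calc |(-(2 * g2 0)) * t + r0| ≤ |(-(2 * g2 0)) * t| + |r0| := abs_add_le _ _
      _ = 2 * |g2 0| * t + |r0| := by
          rw [abs_mul, abs_neg, abs_mul, abs_of_pos htpos,
            abs_of_pos (by norm_num : (0:ℝ) < 2)]
      _ ≤ 2 * N₂ * t + 2 * N₃ * t * t := by
          have := mul_le_mul_of_nonneg_right (mul_le_mul_of_nonneg_left hg20abs'
            (by norm_num : (0:ℝ) ≤ 2)) htpos.le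
          linarith [hr0]
      _ ≤ 2 * (N₂ + N₃) * t := by
          linarith [mul_nonneg (mul_nonneg hN₃0 htpos.le) (sub_nonneg.mpr ht1)]
  have hf0uabs : |f₀ u| ≤ M₀ := hM₀ u (le_trans habs_u hδ1)
  have hf00abs : |f₀ 0| ≤ M₀ := hM₀ 0 (by rw [abs_zero]; norm_num)
  -- numerator identity and bound
  have hid : Pu * Q0 - P0 * Qu
      = 4 * t * (f₀ 0 * g2 u - f₀ u * g2 0) + (2 * f₀ u) * r0 + pu * Q0
        + (-((2 * f₀ 0) * ru)) + (-(p0 * Qu)) := by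
    rw [hrudef, hr0def, hpudef, hp0def]
    ring
  have hT1 : |4 * t * (f₀ 0 * g2 u - f₀ u * g2 0)| ≤ 4 * t * (L * ((A / (2 * m)) ^ 2 * t)) := by
    rw [abs_mul, abs_of_pos (by linarith : (0:ℝ) < 4 * t)]
    apply mul_le_mul_of_nonneg_left _ (by linarith : (0:ℝ) ≤ 4 * t)
    calc |f₀ 0 * g2 u - f₀ u * g2 0| ≤ L * u ^ 2 := hk
      _ ≤ L * ((A / (2 * m)) ^ 2 * t) := mul_le_mul_of_nonneg_left hu2 hL0
  have hT2 : |(2 * f₀ u) * r0| ≤ (2 * M₀) * (2 * N₃ * t * t) := by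
    rw [abs_mul]
    apply mul_le_mul _ hr0 (abs_nonneg _) (by linarith)
    rw [abs_mul, abs_of_pos (by norm_num : (0:ℝ) < 2)]
    linarith [hf0uabs]
  have hT3 : |pu * Q0| ≤ (2 * M₁ * t) * (2 * (N₂ + N₃) * t) := by
    rw [abs_mul]
    exact mul_le_mul hpu hQ0abs (abs_nonneg _)
      (mul_nonneg (mul_nonneg (by norm_num) hM₁0) htpos.le)
  have hT4 : |(2 * f₀ 0) * ru| ≤ (2 * M₀) * (2 * N₃ * t * t) := by
    rw [abs_mul]
    apply mul_le_mul _ hru (abs_nonneg _) (by linarith)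
    rw [abs_mul, abs_of_pos (by norm_num : (0:ℝ) < 2)]
    linarith [hf00abs]
  have hT5 : |p0 * Qu| ≤ (2 * M₁ * t) * (2 * (N₂ + N₃) * t) := by
    rw [abs_mul]
    exact mul_le_mul hp0 hQuabs (abs_nonneg _)
      (mul_nonneg (mul_nonneg (by norm_num) hM₁0) htpos.le)
  have hNum : |Pu * Q0 - P0 * Qu| ≤ K * t ^ 2 := by
    rw [hid]
    have htri : |4 * t * (f₀ 0 * g2 u - f₀ u * g2 0) + (2 * f₀ u) * r0 + pu * Q0
        + (-((2 * f₀ 0) * ru)) + (-(p0 * Qu))|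
        ≤ |4 * t * (f₀ 0 * g2 u - f₀ u * g2 0)| + |(2 * f₀ u) * r0| + |pu * Q0|
          + |(2 * f₀ 0) * ru| + |p0 * Qu| := by
      calc |4 * t * (f₀ 0 * g2 u - f₀ u * g2 0) + (2 * f₀ u) * r0 + pu * Q0
            + (-((2 * f₀ 0) * ru)) + (-(p0 * Qu))|
          ≤ |4 * t * (f₀ 0 * g2 u - f₀ u * g2 0) + (2 * f₀ u) * r0 + pu * Q0
            + (-((2 * f₀ 0) * ru))| + |(-(p0 * Qu))| := abs_add_le _ _
        _ ≤ |4 * t * (f₀ 0 * g2 u - f₀ u * g2 0) + (2 * f₀ u) * r0 + pu * Q0|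
            + |(-((2 * f₀ 0) * ru))| + |(-(p0 * Qu))| := by
              linarith [abs_add_le (4 * t * (f₀ 0 * g2 u - f₀ u * g2 0) + (2 * f₀ u) * r0
                + pu * Q0) (-((2 * f₀ 0) * ru))]
        _ ≤ |4 * t * (f₀ 0 * g2 u - f₀ u * g2 0) + (2 * f₀ u) * r0| + |pu * Q0|
            + |(-((2 * f₀ 0) * ru))| + |(-(p0 * Qu))| := by
              linarith [abs_add_le (4 * t * (f₀ 0 * g2 u - f₀ u * g2 0) + (2 * f₀ u) * r0)
                (pu * Q0)]
        _ ≤ |4 * t * (f₀ 0 * g2 u - f₀ u * g2 0)| + |(2 * f₀ u) * r0| + |pu * Q0|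
            + |(-((2 * f₀ 0) * ru))| + |(-(p0 * Qu))| := by
              linarith [abs_add_le (4 * t * (f₀ 0 * g2 u - f₀ u * g2 0)) ((2 * f₀ u) * r0)]
        _ = |4 * t * (f₀ 0 * g2 u - f₀ u * g2 0)| + |(2 * f₀ u) * r0| + |pu * Q0|
            + |(2 * f₀ 0) * ru| + |p0 * Qu| := by rw [abs_neg, abs_neg]
    have hsum : 4 * t * (L * ((A / (2 * m)) ^ 2 * t)) + (2 * M₀) * (2 * N₃ * t * t)
        + (2 * M₁ * t) * (2 * (N₂ + N₃) * t) + (2 * M₀) * (2 * N₃ * t * t)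
        + (2 * M₁ * t) * (2 * (N₂ + N₃) * t) = K * t ^ 2 := by
      rw [hKdef]
      ring
    linarith [htri, hT1, hT2, hT3, hT4, hT5]
  -- final assembly
  have hK0 : 0 ≤ K := by
    rw [hKdef]
    have h1 : 0 ≤ 4 * L * (A / (2 * m)) ^ 2 :=
      mul_nonneg (by linarith) (sq_nonneg _)
    have h2 : 0 ≤ 8 * M₀ * N₃ := by positivity
    have h3 : 0 ≤ 8 * M₁ * (N₂ + N₃) := by positivity
    linarith
  have hden : 8 * (m * t) ^ 2 ≤ 2 * (Qu * Q0) := by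
    have h1 : (2 * (m * t)) * (2 * (m * t)) ≤ Qu * Q0 :=
      mul_le_mul hQu hQ0 (mul_pos two_pos (mul_pos hm htpos)).le hQupos.le
    linarith [h1]
  have hmt2 : (0:ℝ) < 8 * (m * t) ^ 2 := by
    have := pow_pos (mul_pos hm htpos) 2
    linarith
  calc |fL σ l - fL σ 0| = |Pu * Q0 - P0 * Qu| / (2 * (Qu * Q0)) := by
        rw [hdiffeq, abs_div,
          abs_of_pos (mul_pos two_pos (mul_pos hQupos hQ0pos))]
    _ ≤ (K * t ^ 2) / (8 * (m * t) ^ 2) :=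
        div_le_div₀ (mul_nonneg hK0 (sq_nonneg t)) hNum hmt2 hden
    _ = K / (8 * m ^ 2) := by
        rw [mul_pow]
        rw [show (8:ℝ) * (m ^ 2 * t ^ 2) = (8 * m ^ 2) * t ^ 2 by ring]
        rw [mul_div_mul_right _ _ (pow_ne_zero 2 htpos.ne')]
    _ = C := by rw [hCdef]
end

section
/- As σ → ∞, the second derivative of f_L at 0 satisfies f_L''(0) = O(σ³), where f_L (which depends on σ) is the density of the log-likelihood ratio defined in the context. -/
open Filter Real Asymptotics Topology

private lemma aux_deriv_succ {f : ℝ → ℝ} {n : ℕ} (h : ContDiff ℝ ((n : ℕ∞)+1) f) :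
    Differentiable ℝ f ∧ ContDiff ℝ (n : ℕ) (deriv f) := by
  have := contDiff_succ_iff_deriv.mp h
  exact ⟨this.1, this.2.2⟩

private lemma aux_even_deriv_odd {f : ℝ → ℝ} (h : ∀ x, f (-x) = f x) (x : ℝ) :
    deriv f (-x) = -deriv f x := by
  have h1 : (fun y : ℝ => f (-y)) = f := funext h
  have h2 := deriv_comp_neg f x
  rw [h1] at h2
  linarith

private lemma aux_odd_deriv_even {f : ℝ → ℝ} (h : ∀ x, f (-x) = -f x) (x : ℝ) :
    deriv f (-x) = deriv f x := by
  have h1 : (fun y : ℝ => f (-y)) = fun y => -f y := funext h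
  have h2 := deriv_comp_neg f x
  rw [h1, deriv.fun_neg] at h2
  linarith

private lemma aux_odd_zero {f : ℝ → ℝ} (h : ∀ x, f (-x) = -f x) : f 0 = 0 := by
  have := h 0; rw [neg_zero] at this; linarith

private lemma aux_inv_continuous {f g : ℝ → ℝ} (hf : Continuous f)
    (hl : Function.LeftInverse g f) (hr : Function.RightInverse g f) :
    Continuous g := by
  have hinj : Function.Injective f := hl.injective
  have hsurj : Function.Surjective g := hl.surjective
  rcases hf.strictMono_of_inj hinj with hm | ha
  · exact (Monotone.continuous_of_surjective
      (fun a b hab => hm.le_iff_le.mp (by rwa [hr a, hr b])) hsurj)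
  · have hganti : ∀ a b : ℝ, a ≤ b → g b ≤ g a := by
      intro a b hab
      exact ha.le_iff_ge.mp (by rwa [hr a, hr b])
    have hθ : Monotone (fun l : ℝ => g (-l)) := fun a b hab =>
      hganti (-b) (-a) (by linarith)
    have hθs : Function.Surjective (fun l : ℝ => g (-l)) := by
      intro y
      obtain ⟨x, hx⟩ := hsurj y
      exact ⟨-x, by simpa using hx⟩
    have hc := hθ.continuous_of_surjective hθs
    have : g = fun l : ℝ => (fun l : ℝ => g (-l)) (-l) := by funext l; simp
    rw [this]
    exact hc.comp continuous_neg

/-- As `σ → ∞`, `f_L''(0) = O(σ³)`, where `f_L` is the density of the log-likelihood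
ratio for a binary-input additive-noise channel whose noise has density
`f_N(x) = (1/σ) f₀(x/σ)` with `f₀` an even, strictly log-concave, `C⁴` probability
density satisfying `f₀(0) > 0` and `f₀''(0) < 0`. -/
theorem fL_second_deriv_bigO
    (f₀ : ℝ → ℝ)
    (hpos : ∀ x, 0 < f₀ x)
    (heven : ∀ x, f₀ (-x) = f₀ x)
    (hlogconc : StrictConcaveOn ℝ Set.univ (fun x => Real.log (f₀ x)))
    (hC4 : ContDiff ℝ 4 f₀)
    (hdens : ∫ x : ℝ, f₀ x = 1)
    (h00 : 0 < f₀ 0)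
    (h20 : iteratedDeriv 2 f₀ 0 < 0)
    (φ ψ : ℝ → ℝ → ℝ)
    (hφ : ∀ σ > (0:ℝ), ∀ y : ℝ,
      φ σ y = Real.log (f₀ ((y - 1) / σ)) - Real.log (f₀ ((y + 1) / σ)))
    (hψl : ∀ σ > (0:ℝ), Function.LeftInverse (ψ σ) (φ σ))
    (hψr : ∀ σ > (0:ℝ), Function.RightInverse (ψ σ) (φ σ))
    (fY : ℝ → ℝ → ℝ)
    (hfY : ∀ σ > (0:ℝ), ∀ y : ℝ,
      fY σ y = ((1 / σ) * f₀ ((y - 1) / σ) + (1 / σ) * f₀ ((y + 1) / σ)) / 2)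
    (fL : ℝ → ℝ → ℝ)
    (hfL : ∀ σ > (0:ℝ), ∀ l : ℝ,
      fL σ l = fY σ (ψ σ l) / deriv (φ σ) (ψ σ l)) :
    (fun σ : ℝ => iteratedDeriv 2 (fL σ) 0) =O[Filter.atTop]
      (fun σ : ℝ => σ ^ 3) := by
  classical
  have hf0ne : ∀ x, f₀ x ≠ 0 := fun x => (hpos x).ne'
  obtain ⟨g, hg_def⟩ : ∃ g : ℝ → ℝ, g = fun x => Real.log (f₀ x) := ⟨_, rfl⟩
  obtain ⟨g1, hg1_def⟩ : ∃ h : ℝ → ℝ, h = deriv g := ⟨_, rfl⟩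
  obtain ⟨g2, hg2_def⟩ : ∃ h : ℝ → ℝ, h = deriv g1 := ⟨_, rfl⟩
  obtain ⟨g3, hg3_def⟩ : ∃ h : ℝ → ℝ, h = deriv g2 := ⟨_, rfl⟩
  obtain ⟨f1, hf1_def⟩ : ∃ h : ℝ → ℝ, h = deriv f₀ := ⟨_, rfl⟩
  obtain ⟨f2, hf2_def⟩ : ∃ h : ℝ → ℝ, h = deriv f1 := ⟨_, rfl⟩
  have hgC : ContDiff ℝ 4 g := by rw [hg_def]; exact hC4.log hf0ne
  have hgd : Differentiable ℝ g ∧ ContDiff ℝ 3 g1 := by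
    rw [hg1_def]; exact aux_deriv_succ (n := 3) (by exact_mod_cast hgC)
  have hg1d : Differentiable ℝ g1 ∧ ContDiff ℝ 2 g2 := by
    rw [hg2_def]; exact aux_deriv_succ (n := 2) (by exact_mod_cast hgd.2)
  have hg2d : Differentiable ℝ g2 ∧ ContDiff ℝ 1 g3 := by
    rw [hg3_def]; exact aux_deriv_succ (n := 1) (by exact_mod_cast hg1d.2)
  have hg3d : Differentiable ℝ g3 := hg2d.2.differentiable (by norm_num)
  have hfd : Differentiable ℝ f₀ ∧ ContDiff ℝ 3 f1 := by
    rw [hf1_def]; exact aux_deriv_succ (n := 3) (by exact_mod_cast hC4)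
  have hf1d : Differentiable ℝ f1 ∧ ContDiff ℝ 2 f2 := by
    rw [hf2_def]; exact aux_deriv_succ (n := 2) (by exact_mod_cast hfd.2)
  have hf2c : Continuous f2 := hf1d.2.continuous
  -- parity
  have hgeven : ∀ x, g (-x) = g x := by
    intro x; rw [hg_def]; simp only []; rw [heven]
  have hg1odd : ∀ x, g1 (-x) = -g1 x := by
    intro x; rw [hg1_def]; exact aux_even_deriv_odd hgeven x
  have hg2even : ∀ x, g2 (-x) = g2 x := by
    intro x; rw [hg2_def]
    exact aux_odd_deriv_even (hg1_def ▸ hg1odd) x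
  have hg3odd : ∀ x, g3 (-x) = -g3 x := by
    intro x; rw [hg3_def]
    exact aux_even_deriv_odd (hg2_def ▸ hg2even) x
  have hf1odd : ∀ x, f1 (-x) = -f1 x := by
    intro x; rw [hf1_def]; exact aux_even_deriv_odd heven x
  have hf2even : ∀ x, f2 (-x) = f2 x := by
    intro x; rw [hf2_def]
    exact aux_odd_deriv_even (hf1_def ▸ hf1odd) x
  have hg10 : g1 0 = 0 := aux_odd_zero hg1odd
  have hg30 : g3 0 = 0 := aux_odd_zero hg3odd
  have hf10 : f1 0 = 0 := aux_odd_zero hf1odd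
  -- value of f2 0 and g2 0
  have hf20 : f2 0 < 0 := by
    have hit : iteratedDeriv 2 f₀ 0 = f2 0 := by
      rw [hf2_def, hf1_def, show (2:ℕ) = 1 + 1 from rfl, iteratedDeriv_succ,
        iteratedDeriv_one]
    linarith [h20, hit]
  have hg1eq : ∀ x, g1 x = f1 x / f₀ x := by
    intro x
    have h := ((hfd.1 x).hasDerivAt.log (hf0ne x)).deriv
    rw [hg1_def, hg_def, hf1_def]
    exact h
  have hg20 : g2 0 < 0 := by
    have hg1fun : g1 = fun x => f1 x / f₀ x := funext hg1eq
    have hd : HasDerivAt (fun x => f1 x / f₀ x)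
        ((deriv f1 0 * f₀ 0 - f1 0 * deriv f₀ 0) / f₀ 0 ^ 2) 0 :=
      (hf1d.1 0).hasDerivAt.div (hfd.1 0).hasDerivAt (hf0ne 0)
    have h2 : g2 0 = (f2 0 * f₀ 0 - f1 0 * f1 0) / f₀ 0 ^ 2 := by
      rw [hg2_def, hg1fun, hd.deriv, ← hf2_def, ← hf1_def]
    rw [h2, hf10]
    have h3 : f2 0 * f₀ 0 - 0 * 0 < 0 := by nlinarith
    exact div_neg_of_neg_of_pos h3 (pow_pos h00 2)
  have hg20ne : g2 0 ≠ 0 := ne_of_lt hg20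
  -- limits as σ → ∞
  have htend0 : Tendsto (fun σ : ℝ => 1/σ) atTop (𝓝 (0:ℝ)) := by
    simpa using tendsto_inv_atTop_zero
  have htend_inv : Tendsto (fun σ : ℝ => 1/σ) atTop (𝓝[≠] (0:ℝ)) := by
    rw [tendsto_nhdsWithin_iff]
    refine ⟨htend0, ?_⟩
    filter_upwards [eventually_gt_atTop (0:ℝ)] with σ hσ
    exact Set.mem_compl_singleton_iff.mpr (one_div_ne_zero (ne_of_gt hσ))
  have hA : Tendsto (fun σ : ℝ => g1 (1/σ) / (1/σ)) atTop (𝓝 (g2 0)) := by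
    have h1 : HasDerivAt g1 (g2 0) 0 := by
      rw [hg2_def]; exact (hg1d.1 0).hasDerivAt
    have hs := hasDerivAt_iff_tendsto_slope.mp h1
    refine (hs.comp htend_inv).congr fun σ => ?_
    simp [Function.comp, slope_def_field, hg10]
  have hB : Tendsto (fun σ : ℝ => g3 (1/σ) / (1/σ)) atTop (𝓝 (deriv g3 0)) := by
    have h1 : HasDerivAt g3 (deriv g3 0) 0 := (hg3d 0).hasDerivAt
    have hs := hasDerivAt_iff_tendsto_slope.mp h1
    refine (hs.comp htend_inv).congr fun σ => ?_
    simp [Function.comp, slope_def_field, hg30]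
  have hf0t : Tendsto (fun σ : ℝ => f₀ (1/σ)) atTop (𝓝 (f₀ 0)) :=
    (hC4.continuous.tendsto 0).comp htend0
  have hf2t : Tendsto (fun σ : ℝ => f2 (1/σ)) atTop (𝓝 (f2 0)) :=
    (hf2c.tendsto 0).comp htend0
  -- eventually `g1 (1/σ) ≠ 0`
  have hev_ne : ∀ᶠ σ : ℝ in atTop, g1 (1/σ) ≠ 0 := by
    filter_upwards [hA.eventually_ne hg20ne] with σ hσ
    intro h
    exact hσ (by rw [h, zero_div])
  -- the key closed-form expression
  have key : ∀ᶠ σ : ℝ in atTop, iteratedDeriv 2 (fL σ) 0 =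
      (f₀ (1/σ) * g3 (1/σ) - f2 (1/σ) * g1 (1/σ)) / (8 * g1 (1/σ)^4) := by
    filter_upwards [eventually_gt_atTop (0:ℝ), hev_ne] with σ hσ hne
    have hσ0 : σ ≠ 0 := ne_of_gt hσ
    obtain ⟨D, hD_def⟩ : ∃ h : ℝ → ℝ,
        h = fun y => (g1 ((y-1)/σ) - g1 ((y+1)/σ)) / σ := ⟨_, rfl⟩
    obtain ⟨D1, hD1_def⟩ : ∃ h : ℝ → ℝ,
        h = fun y => (g2 ((y-1)/σ) - g2 ((y+1)/σ)) / σ^2 := ⟨_, rfl⟩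
    obtain ⟨D2, hD2_def⟩ : ∃ h : ℝ → ℝ,
        h = fun y => (g3 ((y-1)/σ) - g3 ((y+1)/σ)) / σ^3 := ⟨_, rfl⟩
    obtain ⟨FY, hFY_def⟩ : ∃ h : ℝ → ℝ,
        h = fun y => ((1/σ) * f₀ ((y-1)/σ) + (1/σ) * f₀ ((y+1)/σ)) / 2 := ⟨_, rfl⟩
    obtain ⟨FY1, hFY1_def⟩ : ∃ h : ℝ → ℝ,
        h = fun y => (f1 ((y-1)/σ) + f1 ((y+1)/σ)) / (2*σ^2) := ⟨_, rfl⟩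
    obtain ⟨FY2, hFY2_def⟩ : ∃ h : ℝ → ℝ,
        h = fun y => (f2 ((y-1)/σ) + f2 ((y+1)/σ)) / (2*σ^3) := ⟨_, rfl⟩
    have hin1 : ∀ y : ℝ, HasDerivAt (fun y : ℝ => (y - 1)/σ) (1/σ) y := by
      intro y
      simpa using ((hasDerivAt_id y).sub_const 1).div_const σ
    have hin2 : ∀ y : ℝ, HasDerivAt (fun y : ℝ => (y + 1)/σ) (1/σ) y := by
      intro y
      simpa using ((hasDerivAt_id y).add_const 1).div_const σ
    have hcomp1 : ∀ (u : ℝ → ℝ), Differentiable ℝ u → ∀ y : ℝ,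
        HasDerivAt (fun y : ℝ => u ((y-1)/σ)) (deriv u ((y-1)/σ) * (1/σ)) y := by
      intro u hu y
      exact HasDerivAt.comp y (hu _).hasDerivAt (hin1 y)
    have hcomp2 : ∀ (u : ℝ → ℝ), Differentiable ℝ u → ∀ y : ℝ,
        HasDerivAt (fun y : ℝ => u ((y+1)/σ)) (deriv u ((y+1)/σ) * (1/σ)) y := by
      intro u hu y
      exact HasDerivAt.comp y (hu _).hasDerivAt (hin2 y)
    have hD_at : ∀ y : ℝ, HasDerivAt (φ σ) (D y) y := by
      intro y
      have h3 := (hcomp1 g hgd.1 y).sub (hcomp2 g hgd.1 y)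
      have hfun : φ σ = fun y => g ((y-1)/σ) - g ((y+1)/σ) := by
        funext z; rw [hφ σ hσ z, hg_def]
      rw [hfun]
      simp only [hD_def]
      refine h3.congr_deriv ?_
      rw [← hg1_def]
      ring
    have hD1_at : ∀ y : ℝ, HasDerivAt D (D1 y) y := by
      intro y
      have h3 := ((hcomp1 g1 hg1d.1 y).sub (hcomp2 g1 hg1d.1 y)).div_const σ
      simp only [hD_def, hD1_def]
      refine h3.congr_deriv ?_
      rw [← hg2_def]
      ring
    have hD2_at : ∀ y : ℝ, HasDerivAt D1 (D2 y) y := by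
      intro y
      have h3 := ((hcomp1 g2 hg2d.1 y).sub (hcomp2 g2 hg2d.1 y)).div_const (σ^2)
      simp only [hD1_def, hD2_def]
      refine h3.congr_deriv ?_
      rw [← hg3_def]
      ring
    have hFY_at : ∀ y : ℝ, HasDerivAt FY (FY1 y) y := by
      intro y
      have h3 := (((hcomp1 f₀ hfd.1 y).const_mul (1/σ)).add
        ((hcomp2 f₀ hfd.1 y).const_mul (1/σ))).div_const 2
      simp only [hFY_def, hFY1_def]
      refine h3.congr_deriv ?_
      rw [← hf1_def]
      ring
    have hFY1_at : ∀ y : ℝ, HasDerivAt FY1 (FY2 y) y := by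
      intro y
      have h3 := ((hcomp1 f1 hf1d.1 y).add (hcomp2 f1 hf1d.1 y)).div_const (2*σ^2)
      simp only [hFY1_def, hFY2_def]
      refine h3.congr_deriv ?_
      rw [← hf2_def]
      ring
    have hderivφ : deriv (φ σ) = D := funext fun y => (hD_at y).deriv
    -- values at zero
    have e1 : ((0:ℝ)-1)/σ = -(1/σ) := by ring
    have e2 : ((0:ℝ)+1)/σ = 1/σ := by ring
    have hD0 : D 0 = -2 * g1 (1/σ) / σ := by
      simp only [hD_def]; rw [e1, e2, hg1odd]; ring
    have hD0ne : D 0 ≠ 0 := by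
      rw [hD0]
      intro h
      rcases div_eq_zero_iff.mp h with h' | h'
      · apply hne; linarith
      · exact hσ0 h'
    have hD10 : D1 0 = 0 := by
      simp only [hD1_def]; rw [e1, e2, hg2even]; ring
    have hD20 : D2 0 = -2 * g3 (1/σ) / σ^3 := by
      simp only [hD2_def]; rw [e1, e2, hg3odd]; ring
    have hFY0 : FY 0 = f₀ (1/σ) / σ := by
      simp only [hFY_def]; rw [e1, e2, heven]; ring
    have hFY10 : FY1 0 = 0 := by
      simp only [hFY1_def]; rw [e1, e2, hf1odd]; ring
    have hFY20 : FY2 0 = f2 (1/σ) / σ^3 := by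
      simp only [hFY2_def]; rw [e1, e2, hf2even]; ring
    -- continuity and inverse facts
    have hDdiff : Differentiable ℝ D := fun y => (hD1_at y).differentiableAt
    have hDcont : Continuous D := hDdiff.continuous
    have hφcont : Continuous (φ σ) :=
      continuous_iff_continuousAt.mpr fun y => (hD_at y).differentiableAt.continuousAt
    have hψcont : Continuous (ψ σ) := aux_inv_continuous hφcont (hψl σ hσ) (hψr σ hσ)
    have hφ0 : φ σ 0 = 0 := by
      rw [hφ σ hσ 0, e1, e2, heven]; ring
    have hψ0 : ψ σ 0 = 0 := by
      have h := hψl σ hσ 0; rwa [hφ0] at h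
    have hUopen : IsOpen {y : ℝ | D y ≠ 0} := isOpen_compl_singleton.preimage hDcont
    have hVopen : IsOpen ((ψ σ) ⁻¹' {y : ℝ | D y ≠ 0}) := hUopen.preimage hψcont
    have h0V : (0:ℝ) ∈ (ψ σ) ⁻¹' {y : ℝ | D y ≠ 0} := by
      simp only [Set.mem_preimage, Set.mem_setOf_eq, hψ0]; exact hD0ne
    have hψd : ∀ l ∈ (ψ σ) ⁻¹' {y : ℝ | D y ≠ 0},
        HasDerivAt (ψ σ) (D (ψ σ l))⁻¹ l := by
      intro l hl
      exact HasDerivAt.of_local_left_inverse hψcont.continuousAt (hD_at (ψ σ l)) hl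
        (Eventually.of_forall (hψr σ hσ))
    have hfLeq : fL σ = fun l => FY (ψ σ l) / D (ψ σ l) := by
      funext l
      rw [hfL σ hσ l, hderivφ, hfY σ hσ]
      simp only [hFY_def]
    -- derivative of fL on a neighbourhood of 0
    have hfL1 : ∀ l ∈ (ψ σ) ⁻¹' {y : ℝ | D y ≠ 0},
        HasDerivAt (fL σ)
          ((FY1 (ψ σ l) * D (ψ σ l) - FY (ψ σ l) * D1 (ψ σ l)) / (D (ψ σ l))^2
            * (D (ψ σ l))⁻¹) l := by
      intro l hl
      have hq : HasDerivAt (fun y => FY y / D y)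
          ((FY1 (ψ σ l) * D (ψ σ l) - FY (ψ σ l) * D1 (ψ σ l)) / (D (ψ σ l))^2)
          (ψ σ l) := (hFY_at _).div (hD1_at _) hl
      have hc := hq.comp l (hψd l hl)
      rw [hfLeq]
      exact hc
    obtain ⟨H, hH_def⟩ : ∃ h : ℝ → ℝ,
        h = fun y => ((FY1 y * D y - FY y * D1 y) / (D y)^2) / D y := ⟨_, rfl⟩
    have hev2 : deriv (fL σ) =ᶠ[𝓝 (0:ℝ)] fun l => H (ψ σ l) := by
      filter_upwards [hVopen.mem_nhds h0V] with l hl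
      rw [(hfL1 l hl).deriv]
      simp only [hH_def]
      ring
    have h2eq : iteratedDeriv 2 (fL σ) 0 = deriv (fun l => H (ψ σ l)) 0 := by
      rw [show (2:ℕ) = 1 + 1 from rfl, iteratedDeriv_succ, iteratedDeriv_one]
      exact hev2.deriv_eq
    -- second derivative computation at 0
    obtain ⟨n0, hn0⟩ : ∃ v : ℝ,
        v = (FY2 0 * D 0 + FY1 0 * D1 0) - (FY1 0 * D1 0 + FY 0 * D2 0) := ⟨_, rfl⟩
    obtain ⟨q0, hq0⟩ : ∃ v : ℝ,
        v = (n0 * (D 0)^2 - (FY1 0 * D 0 - FY 0 * D1 0) * (2 * D 0 * D1 0))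
          / ((D 0)^2)^2 := ⟨_, rfl⟩
    obtain ⟨w0, hw0⟩ : ∃ v : ℝ,
        v = (q0 * D 0 - ((FY1 0 * D 0 - FY 0 * D1 0) / (D 0)^2) * D1 0) / (D 0)^2 :=
      ⟨_, rfl⟩
    have hDsq_at : HasDerivAt (fun y => (D y)^2) (2 * D 0 * D1 0) 0 := by
      have h := (hD1_at 0).pow 2
      refine h.congr_deriv ?_
      norm_num
    have hN_at : HasDerivAt (fun y => FY1 y * D y - FY y * D1 y) n0 0 := by
      rw [hn0]
      exact ((hFY1_at 0).mul (hD1_at 0)).sub ((hFY_at 0).mul (hD2_at 0))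
    have hh1_at : HasDerivAt (fun y => (FY1 y * D y - FY y * D1 y) / (D y)^2) q0 0 := by
      rw [hq0]
      exact hN_at.div hDsq_at (pow_ne_zero 2 hD0ne)
    have hH_at : HasDerivAt H w0 (ψ σ 0) := by
      rw [hψ0, hH_def, hw0]
      exact hh1_at.div (hD1_at 0) hD0ne
    have hcomp0 : HasDerivAt (fun l => H (ψ σ l)) (w0 * (D (ψ σ 0))⁻¹) 0 :=
      hH_at.comp 0 (hψd 0 h0V)
    have hfinal : iteratedDeriv 2 (fL σ) 0 = w0 * (D 0)⁻¹ := by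
      rw [h2eq, hcomp0.deriv, hψ0]
    rw [hfinal, hw0, hq0, hn0, hD0, hD10, hD20, hFY0, hFY10, hFY20]
    field_simp
    ring
  -- conclude the big-O estimate
  obtain ⟨Q, hQ_def⟩ : ∃ q : ℝ → ℝ, q = fun σ =>
      (f₀ (1/σ) * (g3 (1/σ)/(1/σ)) - f2 (1/σ) * (g1 (1/σ)/(1/σ)))
        / (8 * (g1 (1/σ)/(1/σ))^4) := ⟨_, rfl⟩
  have hQt : Tendsto Q atTop
      (𝓝 ((f₀ 0 * deriv g3 0 - f2 0 * g2 0) / (8 * (g2 0)^4))) := by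
    rw [hQ_def]
    exact Tendsto.div ((hf0t.mul hB).sub (hf2t.mul hA))
      (tendsto_const_nhds.mul (hA.pow 4))
      (mul_ne_zero (by norm_num) (pow_ne_zero 4 hg20ne))
  have hratio : (fun σ : ℝ => iteratedDeriv 2 (fL σ) 0 / σ^3) =ᶠ[atTop] Q := by
    filter_upwards [key, eventually_gt_atTop (0:ℝ), hev_ne] with σ hk hσ hne
    rw [hk, hQ_def]
    have hσ0 : σ ≠ 0 := ne_of_gt hσ
    field_simp
  have htend : Tendsto (fun σ : ℝ => iteratedDeriv 2 (fL σ) 0 / σ^3) atTop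
      (𝓝 ((f₀ 0 * deriv g3 0 - f2 0 * g2 0) / (8 * (g2 0)^4))) :=
    Filter.Tendsto.congr' hratio.symm hQt
  refine isBigO_of_div_tendsto_nhds ?_ _ htend
  filter_upwards [eventually_gt_atTop (0:ℝ)] with σ hσ h
  exact absurd h (pow_ne_zero 3 (ne_of_gt hσ))
end

section
/- Let β > 0 and α ∈ (−1,0) ∪ (0,∞). Then lim_{n→∞} (1/n) · α · H_{1/(1+α)}(p_{N^n}) = (1+α)·J(1; β/(1+α)) − J(1; β). -/
open Finset

/-- `J(r;γ) = ∫₀¹ ln(1 + r e^{−γx}) dx`. -/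
noncomputable def Jint (r γ : ℝ) : ℝ :=
  ∫ x in (0:ℝ)..1, Real.log (1 + r * Real.exp (-γ * x))

/-- The Rényi entropy of order `a` (in nats) of a PMF `p` on a finite set. -/
noncomputable def renyiEntropy {X : Type*} [Fintype X] (a : ℝ) (p : X → ℝ) : ℝ :=
  (1 / (1 - a)) * Real.log (∑ x, p x ^ a)

/-- The soft-decision LRC noise PMF on `{0,1}^n`:
`p_{N^n}(x) = e^{−β w(x)/n} / ∏_{i=1}^n (1 + e^{−β i/n})`, where
`w(x) = ∑_{i : x_i = 1} i` (index `i : Fin n` representing the symbol `i+1`). -/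
noncomputable def pN (β : ℝ) (n : ℕ) (x : Fin n → Bool) : ℝ :=
  Real.exp (-β * (∑ i ∈ univ.filter (fun i => x i = true), (((i : ℕ) : ℝ) + 1)) / n) /
    ∏ i ∈ Finset.Icc 1 n, (1 + Real.exp (-β * (i : ℝ) / n))

/-! ### Auxiliary definitions and lemmas -/

noncomputable def flog (γ x : ℝ) : ℝ := Real.log (1 + Real.exp (-γ * x))

lemma flog_antitone {γ : ℝ} (hγ : 0 ≤ γ) : Antitone (flog γ) := by
  intro u v huv
  unfold flog
  have h1 : (0:ℝ) < 1 + Real.exp (-γ * v) := by positivity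
  apply Real.log_le_log h1
  have h2 : -γ * v ≤ -γ * u := by nlinarith
  linarith [Real.exp_le_exp.2 h2]

lemma jint_eq (γ : ℝ) : Jint 1 γ = ∫ x in (0:ℝ)..1, flog γ x := by
  simp [Jint, flog]

lemma icc_shift (F : ℕ → ℝ) (n : ℕ) :
    ∑ i ∈ Finset.Icc 1 n, F i = ∑ i ∈ Finset.range n, F (i + 1) := by
  rw [← Finset.Ico_add_one_right_eq_Icc, Finset.sum_Ico_eq_sum_range]
  simp [add_comm]

lemma sandwich (γ : ℝ) (hγ : 0 < γ) (n : ℕ) (hn : 1 ≤ n) :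
    (n : ℝ) * Jint 1 γ - (flog γ 0 - flog γ 1) ≤ (∑ i ∈ Finset.Icc 1 n, flog γ (i / n)) ∧
      (∑ i ∈ Finset.Icc 1 n, flog γ (i / n)) ≤ (n : ℝ) * Jint 1 γ := by
  have hn0 : (0:ℝ) < n := by exact_mod_cast hn
  set g : ℝ → ℝ := fun u => flog γ (u / n) with hg
  have hA : Antitone g := by
    intro u v huv
    exact flog_antitone hγ.le (by gcongr)
  have hAO : AntitoneOn g (Set.Icc (0:ℝ) (0 + (n:ℕ))) := hA.antitoneOn _
  have hI : (∫ x in (0:ℝ)..(0 + (n:ℕ)), g x) = (n:ℝ) * Jint 1 γ := by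
    rw [zero_add, hg]
    simp only [intervalIntegral.integral_comp_div (f := flog γ) (c := (n:ℝ)) hn0.ne']
    rw [zero_div, div_self hn0.ne', smul_eq_mul, jint_eq]
  have hF : ∀ k : ℕ, g (k : ℝ) = flog γ (k / n) := fun k => rfl
  have hS : (∑ i ∈ Finset.Icc 1 n, flog γ (i / n))
      = ∑ i ∈ Finset.range n, g (0 + ((i + 1 : ℕ) : ℝ)) := by
    rw [icc_shift (fun i => flog γ (i / n)) n]
    exact Finset.sum_congr rfl fun i _ => by rw [zero_add, hF]
  constructor
  · have h2 := hAO.integral_le_sum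
    have hL : (∑ i ∈ Finset.range n, g (0 + (i : ℕ)))
        = flog γ 0 + (∑ i ∈ Finset.Icc 1 n, flog γ (i / n)) - flog γ 1 := by
      have e1 : (∑ i ∈ Finset.range n, g ((i : ℕ) : ℝ)) + g ((n : ℕ) : ℝ)
          = g ((0:ℕ) : ℝ) + ∑ i ∈ Finset.range n, g (((i + 1 : ℕ) : ℝ)) := by
        rw [← Finset.sum_range_succ (fun i => g ((i:ℕ):ℝ)) n, Finset.sum_range_succ']
        push_cast
        ring
      have e2 : g ((n : ℕ) : ℝ) = flog γ 1 := by rw [hF, div_self hn0.ne']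
      have e3 : g ((0 : ℕ) : ℝ) = flog γ 0 := by rw [hF]; norm_num
      have e4 : (∑ i ∈ Finset.range n, g (0 + (i : ℕ)))
          = ∑ i ∈ Finset.range n, g ((i : ℕ) : ℝ) := by
        exact Finset.sum_congr rfl fun i _ => by rw [zero_add]
      have e5 : (∑ i ∈ Finset.range n, g (0 + ((i + 1 : ℕ) : ℝ)))
          = ∑ i ∈ Finset.range n, g (((i + 1 : ℕ) : ℝ)) :=
        Finset.sum_congr rfl fun i _ => by rw [zero_add]
      rw [e4, hS, e5]
      have := e1
      rw [e2, e3] at this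
      linarith [this]
    rw [hI, hL] at h2
    linarith [h2]
  · have h1 := hAO.sum_le_integral
    rw [hI] at h1
    rw [hS]
    exact h1

lemma riemann (γ : ℝ) (hγ : 0 < γ) :
    Filter.Tendsto (fun n : ℕ => (1 / (n:ℝ)) * ∑ i ∈ Finset.Icc 1 n, flog γ (i / n))
      Filter.atTop (nhds (Jint 1 γ)) := by
  set C := flog γ 0 - flog γ 1 with hC
  have hlow : Filter.Tendsto (fun n : ℕ => Jint 1 γ - C * (1 / (n:ℝ)))
      Filter.atTop (nhds (Jint 1 γ)) := by
    have hc : Filter.Tendsto (fun _ : ℕ => Jint 1 γ) Filter.atTop (nhds (Jint 1 γ)) :=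
      tendsto_const_nhds
    have h0 : Filter.Tendsto (fun n : ℕ => C * (1 / (n:ℝ))) Filter.atTop (nhds 0) := by
      simpa using tendsto_one_div_atTop_nhds_zero_nat.const_mul C
    simpa using hc.sub h0
  refine tendsto_of_tendsto_of_tendsto_of_le_of_le' hlow tendsto_const_nhds ?_ ?_
  · filter_upwards [Filter.eventually_ge_atTop 1] with n hn
    have hn0 : (0:ℝ) < n := by exact_mod_cast hn
    obtain ⟨h1, h2⟩ := sandwich γ hγ n hn
    have e : Jint 1 γ - C * (1 / (n:ℝ)) = (1 / (n:ℝ)) * ((n:ℝ) * Jint 1 γ - C) := by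
      field_simp
    rw [e]
    exact mul_le_mul_of_nonneg_left h1 (by positivity : (0:ℝ) ≤ 1 / (n:ℝ))
  · filter_upwards [Filter.eventually_ge_atTop 1] with n hn
    have hn0 : (0:ℝ) < n := by exact_mod_cast hn
    obtain ⟨h1, h2⟩ := sandwich γ hγ n hn
    calc (1 / (n:ℝ)) * ∑ i ∈ Finset.Icc 1 n, flog γ (i / n)
        ≤ (1 / (n:ℝ)) * ((n:ℝ) * Jint 1 γ) :=
          mul_le_mul_of_nonneg_left h2 (by positivity)
      _ = Jint 1 γ := by field_simp

lemma sum_exp (n : ℕ) (c : ℝ) :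
    (∑ x : Fin n → Bool, Real.exp (c * ∑ i ∈ univ.filter (fun i => x i = true), (((i : ℕ) : ℝ) + 1)))
      = ∏ i ∈ Finset.Icc 1 n, (1 + Real.exp (c * i)) := by
  have h1 : ∀ x : Fin n → Bool,
      Real.exp (c * ∑ i ∈ univ.filter (fun i => x i = true), (((i : ℕ) : ℝ) + 1))
        = ∏ i : Fin n, (if x i = true then Real.exp (c * (((i : ℕ) : ℝ) + 1)) else 1) := by
    intro x
    rw [Finset.mul_sum, Real.exp_sum, Finset.prod_filter]
  calc (∑ x : Fin n → Bool, Real.exp (c * ∑ i ∈ univ.filter (fun i => x i = true), (((i : ℕ) : ℝ) + 1)))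
      = ∑ x ∈ Fintype.piFinset (fun _ : Fin n => (univ : Finset Bool)),
          ∏ i : Fin n, (if x i = true then Real.exp (c * (((i : ℕ) : ℝ) + 1)) else 1) := by
        rw [Fintype.piFinset_univ]; exact Finset.sum_congr rfl fun x _ => h1 x
    _ = ∏ i : Fin n, ∑ b ∈ (univ : Finset Bool), (if b = true then Real.exp (c * (((i : ℕ) : ℝ) + 1)) else 1) :=
        Finset.sum_prod_piFinset (univ : Finset Bool)
          (fun (i : Fin n) (b : Bool) => if b = true then Real.exp (c * (((i : ℕ) : ℝ) + 1)) else 1)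
    _ = ∏ i : Fin n, (1 + Real.exp (c * (((i : ℕ) : ℝ) + 1))) := by
        refine Finset.prod_congr rfl fun i _ => ?_
        simp [Fintype.sum_bool, add_comm]
    _ = ∏ i ∈ Finset.Icc 1 n, (1 + Real.exp (c * i)) := by
        rw [Fin.prod_univ_eq_prod_range (fun i => (1 + Real.exp (c * (((i : ℕ) : ℝ) + 1))))]
        rw [← Finset.Ico_add_one_right_eq_Icc, Finset.prod_Ico_eq_prod_range]
        refine Finset.prod_congr (by simp) fun i _ => ?_
        push_cast; ring_nf

lemma entropy_eq (β : ℝ) (hβ : 0 < β) (α : ℝ) (hα : -1 < α) (hα0 : α ≠ 0) (n : ℕ) (hn : 1 ≤ n) :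
    α * renyiEntropy (1 / (1 + α)) (pN β n)
      = (1 + α) * (∑ i ∈ Finset.Icc 1 n, flog (β / (1 + α)) (i / n))
        - ∑ i ∈ Finset.Icc 1 n, flog β (i / n) := by
  have hA : 0 < 1 + α := by linarith
  have hn0 : (0:ℝ) < n := by exact_mod_cast hn
  set a : ℝ := 1 / (1 + α) with ha_def
  have ha : 0 < a := by positivity
  set Z : ℝ := ∏ i ∈ Finset.Icc 1 n, (1 + Real.exp (-β * (i : ℝ) / n)) with hZ_def
  have hZpos : 0 < Z := Finset.prod_pos fun i _ => by positivity
  set P : ℝ := ∏ i ∈ Finset.Icc 1 n, (1 + Real.exp ((-(a * β) / n) * i)) with hP_def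
  have hPpos : 0 < P := Finset.prod_pos fun i _ => by positivity
  have step1 : ∀ x : Fin n → Bool, pN β n x ^ a
      = Real.exp ((-(a * β) / n) * ∑ i ∈ univ.filter (fun i => x i = true), (((i : ℕ) : ℝ) + 1)) / Z ^ a := by
    intro x
    rw [pN, Real.div_rpow (Real.exp_pos _).le hZpos.le, ← Real.exp_mul]
    congr 2
    ring
  have step2 : (∑ x : Fin n → Bool, pN β n x ^ a) = P / Z ^ a := by
    rw [Finset.sum_congr rfl fun x _ => step1 x, ← Finset.sum_div, sum_exp n (-(a * β) / n)]
  have step3 : Real.log (∑ x : Fin n → Bool, pN β n x ^ a) = Real.log P - a * Real.log Z := by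
    rw [step2, Real.log_div hPpos.ne' (Real.rpow_pos_of_pos hZpos a).ne', Real.log_rpow hZpos]
  have step4 : Real.log P = ∑ i ∈ Finset.Icc 1 n, flog (β / (1 + α)) (i / n) := by
    rw [hP_def, Real.log_prod (fun i _ => by positivity)]
    refine Finset.sum_congr rfl fun i _ => ?_
    rw [flog]
    congr 2
    rw [ha_def]
    field_simp
  have step5 : Real.log Z = ∑ i ∈ Finset.Icc 1 n, flog β (i / n) := by
    rw [hZ_def, Real.log_prod (fun i _ => by positivity)]
    refine Finset.sum_congr rfl fun i _ => ?_
    rw [flog]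
    congr 2
    ring
  rw [renyiEntropy, step3, step4, step5]
  set S1 : ℝ := ∑ i ∈ Finset.Icc 1 n, flog (β / (1 + α)) (i / n)
  set S2 : ℝ := ∑ i ∈ Finset.Icc 1 n, flog β (i / n)
  have h1a : 1 - a = α / (1 + α) := by
    rw [ha_def]; field_simp; ring
  rw [h1a, ha_def]
  field_simp

theorem soft_renyi_rate (β : ℝ) (hβ : 0 < β) (α : ℝ) (hα : -1 < α) (hα0 : α ≠ 0) :
    Filter.Tendsto
      (fun n : ℕ => (1 / (n : ℝ)) * (α * renyiEntropy (1 / (1 + α)) (pN β n)))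
      Filter.atTop
      (nhds ((1 + α) * Jint 1 (β / (1 + α)) - Jint 1 β)) := by
  have hA : 0 < 1 + α := by linarith
  have hγ : 0 < β / (1 + α) := by positivity
  have h1 := (riemann (β / (1 + α)) hγ).const_mul (1 + α)
  have h2 := riemann β hβ
  have hmain := h1.sub h2
  refine hmain.congr' ?_
  filter_upwards [Filter.eventually_ge_atTop 1] with n hn
  rw [entropy_eq β hβ α hα hα0 n hn]
  ring
end

section
/- Fix α > −1 and β > 0. The function f_{α,β}(t) = α h(t) + J(r_{t,β}; β) − t ln r_{t,β} is strictly concave on (0,1). -/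
/-- `r_{t,β} = (e^{βt} − 1)/(1 − e^{β(t−1)})`. -/
noncomputable def rtβ (t β : ℝ) : ℝ :=
  (Real.exp (β * t) - 1) / (1 - Real.exp (β * (t - 1)))

/-- The binary entropy function (in nats). -/
noncomputable def binEnt (t : ℝ) : ℝ := -t * Real.log t - (1 - t) * Real.log (1 - t)

open Real Set Filter MeasureTheory Metric intervalIntegral

/-- Derivative of `Jint` in `r`, for `r > 0`. -/
lemma Jint_hasDerivAt {β r : ℝ} (hβ : 0 < β) (hr : 0 < r) :
    HasDerivAt (fun s => Jint s β)
      ((β * r)⁻¹ * (Real.log (1 + r) - Real.log (1 + r * Real.exp (-β)))) r := by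
  have hexp : ∀ x : ℝ, (0:ℝ) < Real.exp (-β * x) := fun x => Real.exp_pos _
  have key := intervalIntegral.hasDerivAt_integral_of_dominated_loc_of_deriv_le
      (μ := MeasureTheory.volume)
      (F := fun s x => Real.log (1 + s * Real.exp (-β * x)))
      (F' := fun s x => Real.exp (-β * x) / (1 + s * Real.exp (-β * x)))
      (x₀ := r) (a := 0) (b := 1) (bound := fun _ => (1 : ℝ)) (s := Metric.ball r (r / 2))
      (Metric.ball_mem_nhds r (half_pos hr)) ?_ ?_ ?_ ?_ ?_ ?_
  · have h2 := key.2
    have hFTC : (∫ x in (0:ℝ)..1, Real.exp (-β * x) / (1 + r * Real.exp (-β * x)))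
        = (β * r)⁻¹ * (Real.log (1 + r) - Real.log (1 + r * Real.exp (-β))) := by
      have hA : ∀ x ∈ Set.uIcc (0:ℝ) 1,
          HasDerivAt (fun x => -(β * r)⁻¹ * Real.log (1 + r * Real.exp (-β * x)))
            (Real.exp (-β * x) / (1 + r * Real.exp (-β * x))) x := by
        intro x _
        have hpos : (0:ℝ) < 1 + r * Real.exp (-β * x) := by positivity
        have h1 : HasDerivAt (fun x : ℝ => -β * x) (-β) x := by
          simpa using (hasDerivAt_id x).const_mul (-β)
        have h2 : HasDerivAt (fun x : ℝ => 1 + r * Real.exp (-β * x))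
            (r * (Real.exp (-β * x) * (-β))) x := ((h1.exp).const_mul r).const_add 1
        have h3 := (h2.log (ne_of_gt hpos)).const_mul (-(β * r)⁻¹)
        refine h3.congr_deriv ?_
        field_simp
      have hint : IntervalIntegrable
          (fun x => Real.exp (-β * x) / (1 + r * Real.exp (-β * x)))
          MeasureTheory.volume 0 1 := by
        apply Continuous.intervalIntegrable
        exact (Real.continuous_exp.comp (continuous_const.mul continuous_id)).div
          (continuous_const.add (continuous_const.mul
            (Real.continuous_exp.comp (continuous_const.mul continuous_id))))
          (fun x => by positivity)
      rw [intervalIntegral.integral_eq_sub_of_hasDerivAt hA hint]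
      have e0 : -β * (0:ℝ) = 0 := by ring
      have e1 : -β * (1:ℝ) = -β := by ring
      rw [e0, e1, Real.exp_zero]
      ring
    rw [hFTC] at h2
    exact h2
  · filter_upwards with s
    exact (Real.measurable_log.comp (by fun_prop)).aestronglyMeasurable
  · apply Continuous.intervalIntegrable
    apply Continuous.log
    · fun_prop
    · intro x; positivity
  · apply Continuous.aestronglyMeasurable
    exact (Real.continuous_exp.comp (continuous_const.mul continuous_id)).div
      (continuous_const.add (continuous_const.mul
        (Real.continuous_exp.comp (continuous_const.mul continuous_id))))
      (fun x => by positivity)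
  · filter_upwards with x hx s hs
    rw [Set.uIoc_of_le (zero_le_one), Set.mem_Ioc] at hx
    have hs0 : 0 < s := by
      rw [Metric.mem_ball, Real.dist_eq, abs_lt] at hs
      linarith
    have hd : (0:ℝ) < 1 + s * Real.exp (-β * x) := by positivity
    rw [Real.norm_eq_abs, abs_of_pos (by positivity), div_le_one hd]
    have h1 : Real.exp (-β * x) ≤ 1 := Real.exp_le_one_iff.2 (by nlinarith [hx.1])
    nlinarith [mul_pos hs0 (hexp x)]
  · exact intervalIntegrable_const
  · filter_upwards with x hx s hs
    have hs0 : 0 < s := by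
      rw [Metric.mem_ball, Real.dist_eq, abs_lt] at hs
      linarith
    have hpos : (0:ℝ) < 1 + s * Real.exp (-β * x) := by positivity
    exact ((hasDerivAt_mul_const (Real.exp (-β * x))).const_add 1).log (ne_of_gt hpos)

lemma aux_le_one (x : ℝ) : (1 - x) * Real.exp x ≤ 1 := by
  have h := mul_le_mul_of_nonneg_right (Real.add_one_le_exp (-x)) (Real.exp_pos x).le
  rw [Real.exp_neg, inv_mul_cancel₀ (ne_of_gt (Real.exp_pos x))] at h
  linear_combination h

lemma two_sub_mul_exp_le (x : ℝ) (hx : 0 ≤ x) : (2 - x) * Real.exp x ≤ x + 2 := by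
  have hder : ∀ y : ℝ, HasDerivAt (fun y : ℝ => (y + 2) - (2 - y) * Real.exp y)
      (1 - (1 - y) * Real.exp y) y := by
    intro y
    have h1 : HasDerivAt (fun y : ℝ => (2 - y) * Real.exp y)
        ((-1) * Real.exp y + (2 - y) * Real.exp y) y :=
      ((hasDerivAt_id y).const_sub 2).mul (Real.hasDerivAt_exp y)
    have h2 : HasDerivAt (fun y : ℝ => y + 2) 1 y := (hasDerivAt_id y).add_const 2
    refine (h2.sub h1).congr_deriv ?_
    ring
  have hmono : Monotone (fun y : ℝ => (y + 2) - (2 - y) * Real.exp y) :=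
    monotone_of_deriv_nonneg (fun y => (hder y).differentiableAt)
      (fun y => by rw [(hder y).deriv]; nlinarith [aux_le_one y])
  have h := hmono hx
  simp only [Real.exp_zero] at h
  nlinarith [h]

lemma inv_exp_sub_one {x : ℝ} (hx : 0 < x) : 1/x - 1/2 ≤ 1/(Real.exp x - 1) := by
  have hA : 0 < Real.exp x - 1 := by
    have := Real.one_lt_exp_iff.2 hx; linarith
  have key := two_sub_mul_exp_le x hx.le
  have hrw : 1/x - 1/2 = (2 - x)/(2*x) := by
    rw [div_sub_div _ _ (ne_of_gt hx) two_ne_zero, mul_comm x 2]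
    norm_num
  rw [hrw, div_le_div_iff₀ (by positivity) hA]
  nlinarith [key]

lemma rt_pos {t β : ℝ} (hβ : 0 < β) (ht : t ∈ Set.Ioo (0:ℝ) 1) : 0 < rtβ t β := by
  have ha : 1 < Real.exp (β * t) := Real.one_lt_exp_iff.2 (mul_pos hβ ht.1)
  have hb : Real.exp (β * (t - 1)) < 1 := Real.exp_lt_one_iff.2 (by nlinarith [ht.2])
  exact div_pos (by linarith) (by linarith)

lemma rt_hasDerivAt {t β : ℝ} (hβ : 0 < β) (ht : t ∈ Set.Ioo (0:ℝ) 1) :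
    HasDerivAt (fun t => rtβ t β)
      (β * (Real.exp (β * t) - Real.exp (β * (t - 1))) / (1 - Real.exp (β * (t - 1)))^2) t := by
  have hb : Real.exp (β * (t - 1)) < 1 := Real.exp_lt_one_iff.2 (by nlinarith [ht.2])
  have hq : (1:ℝ) - Real.exp (β * (t - 1)) ≠ 0 := by linarith
  have hp : HasDerivAt (fun t : ℝ => Real.exp (β * t) - 1) (Real.exp (β * t) * β) t := by
    have h1 : HasDerivAt (fun t : ℝ => β * t) β t := by
      simpa using (hasDerivAt_id t).const_mul β
    exact h1.exp.sub_const 1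
  have hq' : HasDerivAt (fun t : ℝ => 1 - Real.exp (β * (t - 1)))
      (-(Real.exp (β * (t - 1)) * β)) t := by
    have h1 : HasDerivAt (fun t : ℝ => β * (t - 1)) β t := by
      simpa using ((hasDerivAt_id t).sub_const 1).const_mul β
    exact h1.exp.const_sub 1
  have h := hp.div hq' hq
  simp only [rtβ]
  refine h.congr_deriv ?_
  congr 1
  ring

lemma rt_identity {t β : ℝ} (hβ : 0 < β) (ht : t ∈ Set.Ioo (0:ℝ) 1) :
    1 + rtβ t β = Real.exp (β * t) * (1 + rtβ t β * Real.exp (-β)) := by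
  have hb : Real.exp (β * (t - 1)) < 1 := Real.exp_lt_one_iff.2 (by nlinarith [ht.2])
  have hq : (1:ℝ) - Real.exp (β * (t - 1)) ≠ 0 := by linarith
  have hab : Real.exp (β * (t - 1)) = Real.exp (β * t) * Real.exp (-β) := by
    rw [← Real.exp_add]; ring_nf
  simp only [rtβ]
  rw [hab] at hq ⊢
  field_simp
  ring

lemma Jint_rt_hasDerivAt {t β : ℝ} (hβ : 0 < β) (ht : t ∈ Set.Ioo (0:ℝ) 1) :
    HasDerivAt (fun s => Jint s β) (t / rtβ t β) (rtβ t β) := by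
  have hr := rt_pos hβ ht
  have h := Jint_hasDerivAt hβ hr
  convert h using 1
  have hpos2 : (0:ℝ) < 1 + rtβ t β * Real.exp (-β) := by positivity
  rw [rt_identity hβ ht, Real.log_mul (ne_of_gt (Real.exp_pos _)) (ne_of_gt hpos2),
    Real.log_exp, add_sub_cancel_right]
  field_simp

lemma binEnt_hasDerivAt {t : ℝ} (ht : t ∈ Set.Ioo (0:ℝ) 1) :
    HasDerivAt binEnt (Real.log (1 - t) - Real.log t) t := by
  have h1 : HasDerivAt (fun t : ℝ => t * Real.log t) (Real.log t + 1) t :=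
    Real.hasDerivAt_mul_log (ne_of_gt ht.1)
  have h2 : HasDerivAt (fun t : ℝ => (1 - t) * Real.log (1 - t))
      (-(Real.log (1 - t) + 1)) t := by
    have hi : HasDerivAt (fun t : ℝ => 1 - t) (-1) t := (hasDerivAt_id t).const_sub 1
    have := (Real.hasDerivAt_mul_log (x := 1 - t) (by nlinarith [ht.2])).comp t hi
    refine this.congr_deriv ?_
    ring
  have h := (h1.neg).sub h2
  have hfun : binEnt = fun t : ℝ => -(t * Real.log t) - (1 - t) * Real.log (1 - t) := by
    funext x; simp only [binEnt]; ring
  rw [hfun]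
  refine h.congr_deriv ?_
  ring

lemma main_hasDerivAt {α t β : ℝ} (hβ : 0 < β) (ht : t ∈ Set.Ioo (0:ℝ) 1) :
    HasDerivAt (fun t => α * binEnt t + Jint (rtβ t β) β - t * Real.log (rtβ t β))
      (α * (Real.log (1 - t) - Real.log t) - Real.log (rtβ t β)) t := by
  have hr := rt_pos hβ ht
  have hrd := rt_hasDerivAt hβ ht
  have h1 := (binEnt_hasDerivAt ht).const_mul α
  have h2 : HasDerivAt (fun t => Jint (rtβ t β) β)
      (t / rtβ t β * (β * (Real.exp (β * t) - Real.exp (β * (t - 1))) /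
        (1 - Real.exp (β * (t - 1)))^2)) t :=
    by have := (Jint_rt_hasDerivAt hβ ht).comp t hrd; exact this
  have h3 : HasDerivAt (fun t => t * Real.log (rtβ t β))
      (1 * Real.log (rtβ t β) + t * ((β * (Real.exp (β * t) - Real.exp (β * (t - 1))) /
        (1 - Real.exp (β * (t - 1)))^2) / rtβ t β)) t :=
    (hasDerivAt_id t).mul (hrd.log (ne_of_gt hr))
  have h := (h1.add h2).sub h3
  refine h.congr_deriv ?_
  field_simp
  ring

lemma phi_hasDerivAt {α t β : ℝ} (hβ : 0 < β) (ht : t ∈ Set.Ioo (0:ℝ) 1) :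
    HasDerivAt (fun t => α * (Real.log (1 - t) - Real.log t) - Real.log (rtβ t β))
      (α * (-(1 - t)⁻¹ - t⁻¹) - (β * (Real.exp (β * t) - Real.exp (β * (t - 1))) /
        (1 - Real.exp (β * (t - 1)))^2) / rtβ t β) t := by
  have h1t : (0:ℝ) < 1 - t := by nlinarith [ht.2]
  have ha : HasDerivAt (fun t : ℝ => Real.log (1 - t)) ((-1) / (1 - t)) t :=
    ((hasDerivAt_id t).const_sub 1).log (ne_of_gt h1t)
  have hb : HasDerivAt Real.log t⁻¹ t := Real.hasDerivAt_log (ne_of_gt ht.1)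
  have hc := (rt_hasDerivAt hβ ht).log (ne_of_gt (rt_pos hβ ht))
  have h := ((ha.sub hb).const_mul α).sub hc
  refine h.congr_deriv ?_
  ring

lemma phi_deriv_neg {α t β : ℝ} (hα : -1 < α) (hβ : 0 < β) (ht : t ∈ Set.Ioo (0:ℝ) 1) :
    α * (-(1 - t)⁻¹ - t⁻¹) - (β * (Real.exp (β * t) - Real.exp (β * (t - 1))) /
      (1 - Real.exp (β * (t - 1)))^2) / rtβ t β < 0 := by
  have h1t : (0:ℝ) < 1 - t := by nlinarith [ht.2]
  have ht0 := ht.1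
  have hA : (0:ℝ) < Real.exp (β * t) - 1 := by
    have := Real.one_lt_exp_iff.2 (mul_pos hβ ht0); linarith
  have hC : (0:ℝ) < Real.exp (β * (1 - t)) - 1 := by
    have := Real.one_lt_exp_iff.2 (mul_pos hβ h1t); linarith
  have hbc : Real.exp (β * (t - 1)) = (Real.exp (β * (1 - t)))⁻¹ := by
    rw [← Real.exp_neg]; ring_nf
  have hb1 : Real.exp (β * (t - 1)) < 1 := Real.exp_lt_one_iff.2 (by nlinarith)
  have hcne : Real.exp (β * (1 - t)) ≠ 0 := ne_of_gt (Real.exp_pos _)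
  have hratio : (β * (Real.exp (β * t) - Real.exp (β * (t - 1))) /
      (1 - Real.exp (β * (t - 1)))^2) / rtβ t β
      = β * (1/(Real.exp (β * t) - 1) + 1/(Real.exp (β * (1 - t)) - 1) + 1) := by
    simp only [rtβ]
    rw [hbc]
    have h1 : (1:ℝ) - (Real.exp (β * (1 - t)))⁻¹ ≠ 0 := by
      rw [← hbc]; linarith
    field_simp
    ring
  rw [hratio]
  have k1 := inv_exp_sub_one (mul_pos hβ ht0)
  have k2 := inv_exp_sub_one (mul_pos hβ h1t)
  have e1 : β * (1/(β * t)) = 1/t := by field_simp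
  have e2 : β * (1/(β * (1 - t))) = 1/(1 - t) := by field_simp
  have hsum : 1/(β * t) + 1/(β * (1 - t)) ≤
      1/(Real.exp (β * t) - 1) + 1/(Real.exp (β * (1 - t)) - 1) + 1 := by linarith
  have hmul := mul_le_mul_of_nonneg_left hsum hβ.le
  have hexpand : β * (1/(β * t) + 1/(β * (1 - t))) = 1/t + 1/(1 - t) := by
    field_simp
  have hD : 1/t + 1/(1 - t) ≤
      β * (1/(Real.exp (β * t) - 1) + 1/(Real.exp (β * (1 - t)) - 1) + 1) := by
    rw [← hexpand]; exact hmul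
  have hS : (0:ℝ) < 1/t + 1/(1 - t) := by positivity
  have hαS : (-α) * (1/t + 1/(1 - t)) < 1 * (1/t + 1/(1 - t)) :=
    mul_lt_mul_of_pos_right (by linarith) hS
  have hre : α * (-(1 - t)⁻¹ - t⁻¹) = (-α) * (1/t + 1/(1 - t)) := by ring
  linarith [hαS, hD, hre]

theorem f_alpha_beta_strictConcave (α β : ℝ) (hα : -1 < α) (hβ : 0 < β) :
    StrictConcaveOn ℝ (Set.Ioo (0:ℝ) 1)
      (fun t => α * binEnt t + Jint (rtβ t β) β - t * Real.log (rtβ t β)) := by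
  have hder : ∀ t ∈ Set.Ioo (0:ℝ) 1,
      HasDerivAt (fun t => α * binEnt t + Jint (rtβ t β) β - t * Real.log (rtβ t β))
        (α * (Real.log (1 - t) - Real.log t) - Real.log (rtβ t β)) t :=
    fun t ht => main_hasDerivAt hβ ht
  have hcont : ContinuousOn
      (fun t => α * binEnt t + Jint (rtβ t β) β - t * Real.log (rtβ t β))
      (Set.Ioo (0:ℝ) 1) :=
    fun t ht => (hder t ht).continuousAt.continuousWithinAt
  apply StrictAntiOn.strictConcaveOn_of_deriv (convex_Ioo 0 1) hcont
  rw [interior_Ioo]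
  have heq : Set.EqOn
      (deriv (fun t => α * binEnt t + Jint (rtβ t β) β - t * Real.log (rtβ t β)))
      (fun t => α * (Real.log (1 - t) - Real.log t) - Real.log (rtβ t β))
      (Set.Ioo (0:ℝ) 1) := fun t ht => (hder t ht).deriv
  have hanti : StrictAntiOn
      (fun t => α * (Real.log (1 - t) - Real.log t) - Real.log (rtβ t β))
      (Set.Ioo (0:ℝ) 1) := by
    apply strictAntiOn_of_deriv_neg (convex_Ioo 0 1)
    · exact fun t ht => (phi_hasDerivAt hβ ht).continuousAt.continuousWithinAt
    · rw [interior_Ioo]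
      intro t ht
      rw [(phi_hasDerivAt hβ ht).deriv]
      exact phi_deriv_neg hα hβ ht
  intro x hx y hy hxy
  rw [heq hx, heq hy]
  exact hanti hx hy hxy
end

section
/- Let β > 0. For every α ∈ (0,∞): sup_{t∈(0,1)} [α h(t) + J(r_{t,β}; β) − t ln r_{t,β}] > (1+α)·J(1; β/(1+α)); and for every α ∈ (−1,0): sup_{t∈(0,1)} [α h(t) + J(r_{t,β}; β) − t ln r_{t,β}] < (1+α)·J(1; β/(1+α)). (Equivalently, Λ_Z(α) > Λ_N(α) for α > 0 and Λ_Z(α) < Λ_N(α) for α ∈ (−1,0).) -/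
open Real intervalIntegral MeasureTheory

lemma binEnt_eq (t : ℝ) : binEnt t = Real.binEntropy t := by
  simp [binEnt, Real.binEntropy, Real.log_inv]; ring

/-- The Fermi factor. -/
noncomputable def sig (r γ x : ℝ) : ℝ := r * exp (-γ * x) / (1 + r * exp (-γ * x))

lemma w_pos {r γ x : ℝ} (hr : 0 < r) : 0 < 1 + r * exp (-γ * x) := by positivity

lemma sig_pos {r γ x : ℝ} (hr : 0 < r) : 0 < sig r γ x :=
  div_pos (by positivity) (w_pos hr)

lemma sig_lt_one {r γ x : ℝ} (hr : 0 < r) : sig r γ x < 1 := by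
  rw [sig, div_lt_one (w_pos hr)]
  nlinarith [exp_pos (-γ * x)]

lemma one_sub_sig {r γ x : ℝ} (hr : 0 < r) :
    1 - sig r γ x = 1 / (1 + r * exp (-γ * x)) := by
  have hw := (w_pos (r := r) (γ := γ) (x := x) hr).ne'
  rw [sig, eq_div_iff hw, sub_mul, div_mul_cancel₀ _ hw]; ring

lemma sig_cont {r γ : ℝ} (hr : 0 < r) : Continuous (sig r γ) := by
  apply Continuous.div (by fun_prop) (by fun_prop)
  intro x; exact (w_pos (γ := γ) (x := x) hr).ne'

/-- Fenchel–Young equality: `log (1+y) = q log y + binEnt q` at `q = y/(1+y)`. -/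
lemma FY_eq {y : ℝ} (hy : 0 < y) :
    y / (1 + y) * Real.log y + binEnt (y / (1 + y)) = Real.log (1 + y) := by
  have h1 : (0:ℝ) < 1 + y := by linarith
  have hq : (0:ℝ) < y / (1 + y) := div_pos hy h1
  have h1q : 1 - y / (1 + y) = 1 / (1 + y) := by field_simp; ring
  rw [binEnt, h1q, Real.log_div hy.ne' h1.ne', Real.log_div one_ne_zero h1.ne',
    Real.log_one]
  field_simp
  ring

/-- Fenchel–Young inequality. -/
lemma FY_le {q y : ℝ} (hq0 : 0 < q) (hq1 : q < 1) (hy : 0 < y) :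
    q * Real.log y + binEnt q ≤ Real.log (1 + y) := by
  have h1 : (0:ℝ) < 1 + y := by linarith
  have h1q : (0:ℝ) < 1 - q := by linarith
  -- log (y/(q(1+y))) ≤ y/(q(1+y)) - 1 ; log (1/((1-q)(1+y))) ≤ 1/((1-q)(1+y)) - 1
  have l1 : Real.log (y / (q * (1 + y))) ≤ y / (q * (1 + y)) - 1 :=
    Real.log_le_sub_one_of_pos (by positivity)
  have l2 : Real.log (1 / ((1 - q) * (1 + y))) ≤ 1 / ((1 - q) * (1 + y)) - 1 :=
    Real.log_le_sub_one_of_pos (by positivity)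
  have e1 : Real.log (y / (q * (1 + y))) = Real.log y - Real.log q - Real.log (1 + y) := by
    rw [Real.log_div hy.ne' (by positivity), Real.log_mul hq0.ne' h1.ne']; ring
  have e2 : Real.log (1 / ((1 - q) * (1 + y))) = - Real.log (1 - q) - Real.log (1 + y) := by
    rw [Real.log_div one_ne_zero (by positivity), Real.log_mul h1q.ne' h1.ne', Real.log_one]; ring
  rw [e1] at l1; rw [e2] at l2
  have c1 : q * (Real.log y - Real.log q - Real.log (1 + y)) ≤ q * (y / (q * (1 + y)) - 1) :=
    mul_le_mul_of_nonneg_left l1 hq0.le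
  have c2 : (1 - q) * (- Real.log (1 - q) - Real.log (1 + y)) ≤
      (1 - q) * (1 / ((1 - q) * (1 + y)) - 1) := mul_le_mul_of_nonneg_left l2 h1q.le
  have e3 : q * (y / (q * (1 + y)) - 1) + (1 - q) * (1 / ((1 - q) * (1 + y)) - 1) = 0 := by
    field_simp
    ring
  rw [binEnt]
  nlinarith [c1, c2]


lemma hasDerivAt_binEnt {p : ℝ} (h0 : p ≠ 0) (h1 : p ≠ 1) :
    HasDerivAt binEnt (log (1 - p) - log p) p := by
  have := Real.hasDerivAt_binEntropy h0 h1
  exact this.congr_of_eventuallyEq (by filter_upwards with x using (binEnt_eq x))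

noncomputable def phiP (u : ℝ) : ℝ := log u - log (1 - u) - 4 * u

lemma hasDerivAt_phiP {u : ℝ} (h0 : 0 < u) (h1 : u < 1) :
    HasDerivAt phiP (1 / u + 1 / (1 - u) - 4) u := by
  have h1' : (0:ℝ) < 1 - u := by linarith
  have d1 : HasDerivAt (fun v : ℝ => log v) (1/u) u := by
    simpa [one_div] using Real.hasDerivAt_log h0.ne'
  have d2 : HasDerivAt (fun v : ℝ => log (1 - v)) (-(1/(1-u))) u := by
    have base : HasDerivAt (fun v : ℝ => log v) (1/(1-u)) (1-u) := by
      simpa [one_div] using Real.hasDerivAt_log h1'.ne'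
    have lin : HasDerivAt (fun v : ℝ => 1 - v) (-1) u := by
      simpa using ((hasDerivAt_id u).const_sub 1)
    simpa [Function.comp_def] using base.comp u lin
  have d3 : HasDerivAt (fun v : ℝ => 4 * v) 4 u := by
    simpa using (hasDerivAt_id u).const_mul 4
  have := (d1.sub d2).sub d3
  exact this.congr_deriv (by ring)

lemma phiP_mono : MonotoneOn phiP (Set.Ioo (0:ℝ) 1) := by
  have hder : ∀ u ∈ Set.Ioo (0:ℝ) 1, HasDerivAt phiP (1/u + 1/(1-u) - 4) u :=
    fun u hu => hasDerivAt_phiP hu.1 hu.2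
  apply monotoneOn_of_hasDerivWithinAt_nonneg (convex_Ioo 0 1)
    (fun u hu => (hder u hu).continuousAt.continuousWithinAt)
    (f' := fun u => 1/u + 1/(1-u) - 4)
    (fun u hu => by
      have hu' : u ∈ Set.Ioo (0:ℝ) 1 := by rwa [interior_Ioo] at hu
      exact (hder u hu').hasDerivWithinAt)
  intro u hu
  rw [interior_Ioo] at hu
  obtain ⟨h0, h1⟩ := hu
  have h1' : (0:ℝ) < 1 - u := by linarith
  have key : 1/u + 1/(1-u) - 4 = (1 - 2*u)^2 / (u * (1-u)) := by field_simp; ring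
  rw [key]; positivity

/-- Binary Pinsker / strong concavity of binary entropy. -/
lemma pinsker {p t : ℝ} (hp0 : 0 < p) (hp1 : p < 1) (ht0 : 0 < t) (ht1 : t < 1) :
    binEnt p ≤ binEnt t + (log (1 - t) - log t) * (p - t) - 2 * (p - t)^2 := by
  set f : ℝ → ℝ := fun q => binEnt t + (log (1-t) - log t) * (q - t) - 2 * (q - t)^2 - binEnt q
    with hf
  have hder : ∀ q ∈ Set.Ioo (0:ℝ) 1, HasDerivAt f (phiP q - phiP t) q := by
    intro q hq
    have d1 : HasDerivAt (fun q : ℝ => binEnt t + (log (1-t) - log t) * (q - t) - 2 * (q - t)^2)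
        ((log (1-t) - log t) - 4 * (q - t)) q := by
      have a1 : HasDerivAt (fun q : ℝ => (log (1-t) - log t) * (q - t)) (log (1-t) - log t) q := by
        simpa using ((hasDerivAt_id q).sub_const t).const_mul (log (1-t) - log t)
      have a2 : HasDerivAt (fun q : ℝ => 2 * (q - t)^2) (4 * (q - t)) q := by
        have : HasDerivAt (fun q : ℝ => (q - t)^2) (2 * (q - t)) q := by
          simpa [Pi.pow_def] using ((hasDerivAt_id q).sub_const t).pow 2
        have := this.const_mul 2
        exact this.congr_deriv (by ring)
      simpa [Pi.sub_def] using (a1.const_add (binEnt t)).sub a2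
    have d2 := hasDerivAt_binEnt hq.1.ne' hq.2.ne
    have := d1.sub d2
    refine this.congr_deriv ?_
    simp only [phiP]; ring
  have hcont : ContinuousOn f (Set.Ioo (0:ℝ) 1) :=
    fun q hq => (hder q hq).continuousAt.continuousWithinAt
  have hft : f t = 0 := by simp [hf]
  rcases le_total t p with h | h
  · -- f monotone on Icc t p ⊆ Ioo 0 1
    have hsub : Set.Icc t p ⊆ Set.Ioo (0:ℝ) 1 := fun q hq => ⟨lt_of_lt_of_le ht0 hq.1, lt_of_le_of_lt hq.2 hp1⟩
    have hmono : MonotoneOn f (Set.Icc t p) := by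
      apply monotoneOn_of_hasDerivWithinAt_nonneg (convex_Icc t p)
        (hcont.mono hsub) (f' := fun q => phiP q - phiP t)
        (fun q hq => (hder q (hsub (interior_subset hq))).hasDerivWithinAt)
      intro q hq
      rw [interior_Icc] at hq
      have hq' := hsub (Set.Ioo_subset_Icc_self hq)
      have := phiP_mono ⟨ht0, ht1⟩ hq' (le_of_lt hq.1)
      linarith
    have := hmono (Set.left_mem_Icc.2 h) (Set.right_mem_Icc.2 h) h
    rw [hft] at this
    simp only [hf] at this; linarith
  · have hsub : Set.Icc p t ⊆ Set.Ioo (0:ℝ) 1 := fun q hq => ⟨lt_of_lt_of_le hp0 hq.1, lt_of_le_of_lt hq.2 ht1⟩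
    have hmono : AntitoneOn f (Set.Icc p t) := by
      apply antitoneOn_of_hasDerivWithinAt_nonpos (convex_Icc p t)
        (hcont.mono hsub) (f' := fun q => phiP q - phiP t)
        (fun q hq => (hder q (hsub (interior_subset hq))).hasDerivWithinAt)
      intro q hq
      rw [interior_Icc] at hq
      have hq' := hsub (Set.Ioo_subset_Icc_self hq)
      have := phiP_mono hq' ⟨ht0, ht1⟩ (le_of_lt hq.2)
      linarith
    have := hmono (Set.left_mem_Icc.2 h) (Set.right_mem_Icc.2 h) h
    rw [hft] at this
    simp only [hf] at this; linarith

section sigcalc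
variable {r γ : ℝ}

lemma hasDerivAt_cmul (c x : ℝ) : HasDerivAt (fun y : ℝ => c * y) c x := by
  simpa only [mul_one, id] using (hasDerivAt_id x).const_mul c

lemma hasDerivAt_w (r γ x : ℝ) :
    HasDerivAt (fun x : ℝ => r * exp (-γ * x)) (-γ * (r * exp (-γ * x))) x := by
  have h := ((hasDerivAt_cmul (-γ) x).exp).const_mul r
  refine h.congr_deriv ?_
  ring

lemma hasDerivAt_sig (hr : 0 < r) (x : ℝ) :
    HasDerivAt (sig r γ) (-γ * (sig r γ x * (1 - sig r γ x))) x := by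
  have hwpos := fun y => w_pos (r := r) (γ := γ) (x := y) hr
  have h := (hasDerivAt_w r γ x).div ((hasDerivAt_w r γ x).const_add 1) (hwpos x).ne'
  have he : sig r γ = fun x => r * exp (-γ * x) / (1 + r * exp (-γ * x)) := rfl
  rw [he]
  refine h.congr_deriv ?_
  simp only [sig]
  have h0 : (0:ℝ) < 1 + r * exp (-γ * x) := hwpos x
  field_simp
  ring

lemma sig_antitone (hr : 0 < r) (hγ : 0 < γ) : Antitone (sig r γ) := by
  apply antitone_of_hasDerivAt_nonpos (f' := fun x => -γ * (sig r γ x * (1 - sig r γ x)))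
    (fun x => hasDerivAt_sig hr x)
  intro x
  show -γ * (sig r γ x * (1 - sig r γ x)) ≤ (0:ℝ)
  have h1 := sig_pos (γ := γ) (x := x) hr
  have h2 := sig_lt_one (γ := γ) (x := x) hr
  nlinarith [mul_pos hγ (mul_pos h1 (sub_pos.2 h2))]

lemma sig_one_sub_sig_le (hr : 0 < r) (x : ℝ) : sig r γ x * (1 - sig r γ x) ≤ 1/4 := by
  have h1 := sig_pos (γ := γ) (x := x) hr
  have h2 := sig_lt_one (γ := γ) (x := x) hr
  nlinarith [sq_nonneg (1 - 2 * sig r γ x)]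

/-- Lipschitz-type bound from the left endpoint. -/
lemma sig_lip_left (hr : 0 < r) (hγ : 0 < γ) {x : ℝ} (hx : 0 ≤ x) :
    sig r γ 0 - sig r γ x ≤ γ * x / 4 := by
  have key : Antitone (fun x => sig r γ 0 - sig r γ x - γ * x / 4) := by
    apply antitone_of_hasDerivAt_nonpos
      (f' := fun x => γ * (sig r γ x * (1 - sig r γ x)) - γ/4)
    · intro x
      have h := ((hasDerivAt_sig (γ := γ) hr x).const_sub (sig r γ 0)).sub
        ((hasDerivAt_cmul (γ/4) x))
      refine (h.congr_deriv ?_).congr_of_eventuallyEq (Filter.Eventually.of_forall fun y => ?_)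
      · ring
      · simp only [Pi.sub_apply]; ring
    · intro x
      show γ * (sig r γ x * (1 - sig r γ x)) - γ/4 ≤ (0:ℝ)
      have := sig_one_sub_sig_le (γ := γ) hr x
      nlinarith
  have := key hx
  simp only [mul_zero, zero_div, sub_zero] at this
  linarith

lemma sig_lip_right (hr : 0 < r) (hγ : 0 < γ) {x : ℝ} (hx : x ≤ 1) :
    sig r γ x - sig r γ 1 ≤ γ * (1 - x) / 4 := by
  have key : Monotone (fun x => sig r γ x - sig r γ 1 - γ * (1 - x) / 4) := by
    apply monotone_of_hasDerivAt_nonneg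
      (f' := fun x => -γ * (sig r γ x * (1 - sig r γ x)) + γ/4)
    · intro x
      have h := ((hasDerivAt_sig (γ := γ) hr x).sub_const (sig r γ 1)).sub
        (((hasDerivAt_cmul (γ/4) x).const_sub (γ/4)))
      refine (h.congr_deriv ?_).congr_of_eventuallyEq (Filter.Eventually.of_forall fun y => ?_)
      · ring
      · simp only [Pi.sub_apply]; ring
    · intro x
      show (0:ℝ) ≤ -γ * (sig r γ x * (1 - sig r γ x)) + γ/4
      have := sig_one_sub_sig_le (γ := γ) hr x
      nlinarith
  have := key hx
  simp only [sub_self, mul_zero, zero_div, sub_zero] at this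
  linarith

lemma sig_intble (hr : 0 < r) (a b : ℝ) : IntervalIntegrable (sig r γ) MeasureTheory.volume a b :=
  (sig_cont hr).intervalIntegrable a b

/-- `∫₀¹ σ = (log(1+r) - log(1+re^{-γ}))/γ`. -/
lemma integral_sig (hr : 0 < r) (hγ : 0 < γ) :
    ∫ x in (0:ℝ)..1, sig r γ x = (Real.log (1 + r) - Real.log (1 + r * exp (-γ))) / γ := by
  have hF : ∀ x ∈ Set.uIcc (0:ℝ) 1, HasDerivAt (fun x => -(1/γ) * Real.log (1 + r * exp (-γ * x)))
      (sig r γ x) x := by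
    intro x _
    have hw := (hasDerivAt_w r γ x).const_add 1
    have hlog := (hw.log (w_pos (γ := γ) (x := x) hr).ne').const_mul (-(1/γ))
    refine hlog.congr_deriv ?_
    simp only [sig]
    have h0 : (0:ℝ) < 1 + r * exp (-γ * x) := w_pos hr
    field_simp
  have := intervalIntegral.integral_eq_sub_of_hasDerivAt hF (sig_intble hr 0 1)
  rw [this]
  have e0 : -γ * (0:ℝ) = 0 := by ring
  have e1 : -γ * (1:ℝ) = -γ := by ring
  rw [e0, e1, Real.exp_zero, mul_one]
  field_simp
  ring

/-- `∫₀¹ σ(1-σ) = (σ(0) - σ(1))/γ`. -/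
lemma integral_sig_one_sub (hr : 0 < r) (hγ : 0 < γ) :
    ∫ x in (0:ℝ)..1, sig r γ x * (1 - sig r γ x) = (sig r γ 0 - sig r γ 1) / γ := by
  have hF : ∀ x ∈ Set.uIcc (0:ℝ) 1, HasDerivAt (fun x => -(1/γ) * sig r γ x)
      (sig r γ x * (1 - sig r γ x)) x := by
    intro x _
    have := (hasDerivAt_sig (γ := γ) hr x).const_mul (-(1/γ))
    refine this.congr_deriv ?_
    field_simp
  have hi : IntervalIntegrable (fun x => sig r γ x * (1 - sig r γ x)) MeasureTheory.volume 0 1 := by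
    apply Continuous.intervalIntegrable
    exact (sig_cont hr).mul (continuous_const.sub (sig_cont hr))
  have := intervalIntegral.integral_eq_sub_of_hasDerivAt hF hi
  rw [this]
  field_simp
  ring

end sigcalc

section var
variable {r γ : ℝ}

lemma sig_mean_le (hr : 0 < r) (hγ : 0 < γ) :
    (∫ x in (0:ℝ)..1, sig r γ x) ≤ sig r γ 0 := by
  have h := intervalIntegral.integral_mono_on (by norm_num : (0:ℝ) ≤ 1)
    (sig_intble hr 0 1) (_root_.intervalIntegrable_const (c := sig r γ 0))
    (fun x hx => sig_antitone hr hγ hx.1)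
  simpa using h

lemma le_sig_mean (hr : 0 < r) (hγ : 0 < γ) :
    sig r γ 1 ≤ ∫ x in (0:ℝ)..1, sig r γ x := by
  have h := intervalIntegral.integral_mono_on (by norm_num : (0:ℝ) ≤ 1)
    (_root_.intervalIntegrable_const (c := sig r γ 1)) (sig_intble hr 0 1)
    (fun x hx => sig_antitone hr hγ hx.2)
  simpa using h

lemma var_identity (hr : 0 < r) (hγ : 0 < γ) :
    ∫ x in (0:ℝ)..1, (sig r γ x - ∫ y in (0:ℝ)..1, sig r γ y)^2
      = (∫ y in (0:ℝ)..1, sig r γ y) - (∫ y in (0:ℝ)..1, sig r γ y)^2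
        - (sig r γ 0 - sig r γ 1) / γ := by
  set t := ∫ y in (0:ℝ)..1, sig r γ y with ht
  have i1 : IntervalIntegrable (sig r γ) MeasureTheory.volume 0 1 := sig_intble hr 0 1
  have i2 : IntervalIntegrable (fun x => sig r γ x * (1 - sig r γ x)) MeasureTheory.volume 0 1 :=
    (((sig_cont hr).mul (continuous_const.sub (sig_cont hr)))).intervalIntegrable 0 1
  have i3 : IntervalIntegrable (fun x => 2 * t * sig r γ x) MeasureTheory.volume 0 1 :=
    (continuous_const.mul (sig_cont hr)).intervalIntegrable 0 1
  have hpt : ∀ x : ℝ, (sig r γ x - t)^2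
      = sig r γ x - sig r γ x * (1 - sig r γ x) - 2 * t * sig r γ x + t^2 := fun x => by ring
  calc ∫ x in (0:ℝ)..1, (sig r γ x - t)^2
      = ∫ x in (0:ℝ)..1, (sig r γ x - sig r γ x * (1 - sig r γ x) - 2 * t * sig r γ x + t^2) := by
        simp_rw [hpt]
    _ = (∫ x in (0:ℝ)..1, (sig r γ x - sig r γ x * (1 - sig r γ x) - 2 * t * sig r γ x))
          + ∫ x in (0:ℝ)..1, (t^2 : ℝ) := by
        exact intervalIntegral.integral_add ((i1.sub i2).sub i3) intervalIntegrable_const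
    _ = (∫ x in (0:ℝ)..1, (sig r γ x - sig r γ x * (1 - sig r γ x)))
          - (∫ x in (0:ℝ)..1, 2 * t * sig r γ x) + t^2 := by
        rw [intervalIntegral.integral_sub (i1.sub i2) i3]
        simp
    _ = t - (sig r γ 0 - sig r γ 1) / γ - 2 * t * t + t^2 := by
        rw [intervalIntegral.integral_sub i1 i2, integral_sig_one_sub hr hγ,
          intervalIntegral.integral_const_mul]
    _ = t - t^2 - (sig r γ 0 - sig r γ 1) / γ := by ring

set_option maxHeartbeats 2000000 in
lemma var_lower (hr : 0 < r) (hγ : 0 < γ) :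
    min ((∫ x in (0:ℝ)..1, sig r γ x) * (1 - ∫ x in (0:ℝ)..1, sig r γ x) / 2)
      (γ^3 * ((∫ x in (0:ℝ)..1, sig r γ x) * (1 - ∫ x in (0:ℝ)..1, sig r γ x))^3 / (128 * (γ + 2)))
      ≤ ∫ x in (0:ℝ)..1, (sig r γ x - ∫ y in (0:ℝ)..1, sig r γ y)^2 := by
  set t := ∫ y in (0:ℝ)..1, sig r γ y with ht
  set V := ∫ x in (0:ℝ)..1, (sig r γ x - t)^2 with hV
  set s := t * (1 - t) with hs
  have hcont2 : Continuous (fun x => (sig r γ x - t)^2) := by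
    exact ((sig_cont hr).sub continuous_const).pow 2
  have ht1 : t < 1 := lt_of_le_of_lt (sig_mean_le hr hγ) (sig_lt_one hr)
  have ht0 : 0 < t := lt_of_lt_of_le (sig_pos hr) (le_sig_mean hr hγ)
  have hspos : 0 < s := by rw [hs]; nlinarith
  have hid := var_identity hr hγ
  rw [← ht, ← hV] at hid
  clear_value t V
  by_cases hcase : s / 2 ≤ V
  · exact le_trans (min_le_left _ _) hcase
  push_neg at hcase
  refine le_trans (min_le_right _ _) ?_
  have hd : sig r γ 0 - sig r γ 1 = γ * (s - V) := by
    rw [hs]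
    have hγ' := hγ.ne'
    field_simp at hid ⊢
    nlinarith [hid]
  have hdlb : γ * s / 2 ≤ sig r γ 0 - sig r γ 1 := by rw [hd]; nlinarith
  set d := sig r γ 0 - sig r γ 1 with hdd
  have hdpos : 0 < d := by nlinarith
  clear_value d
  have ha0 : 0 ≤ sig r γ 0 - t := by linarith [sig_mean_le hr hγ]
  have hb0 : 0 ≤ t - sig r γ 1 := by linarith [le_sig_mean hr hγ]
  have key : ∀ c : ℝ, d / 2 ≤ c → c ≤ 1 →
      (∀ m : ℝ, 0 < m → m ≤ 1 → (∀ x ∈ Set.Icc (0:ℝ) 1, True) → True) → True := fun _ _ _ _ => trivial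
  -- common final numeric step
  have final : ∀ c : ℝ, d / 2 ≤ c → c ≤ 1 → min 1 (2 * c / γ) * (c / 2)^2 ≤ V →
      γ^3 * s^3 / (128 * (γ + 2)) ≤ V := by
    intro c hc1 hc2 hmain
    have hcpos : 0 < c := lt_of_lt_of_le (by nlinarith) hc1
    have hmlb : 2 * c / (γ + 2) ≤ min 1 (2 * c / γ) := by
      apply le_min
      · rw [div_le_one (by linarith)]; linarith
      · apply div_le_div_of_nonneg_left (by linarith) hγ (by linarith)
    have h1 : 2 * c / (γ + 2) * (c / 2)^2 ≤ min 1 (2 * c / γ) * (c / 2)^2 :=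
      mul_le_mul_of_nonneg_right hmlb (by positivity)
    have h2 : c^3 / (2 * (γ + 2)) = 2 * c / (γ + 2) * (c / 2)^2 := by
      field_simp
    have hclb : γ * s / 4 ≤ c := by nlinarith
    have h3 : (γ * s / 4)^3 ≤ c^3 := by
      apply pow_le_pow_left₀ (by positivity) hclb
    have h4 : γ^3 * s^3 / (128 * (γ + 2)) ≤ c^3 / (2 * (γ + 2)) := by
      rw [div_le_div_iff₀ (by positivity) (by positivity)]
      nlinarith [h3, hγ, sq_nonneg γ, sq_nonneg s]
    linarith [h4, h2 ▸ h1, h1, hmain, h2.le, h2.ge]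
  rcases le_or_gt (d / 2) (sig r γ 0 - t) with hA | hA
  · -- mass near the left endpoint
    set a := sig r γ 0 - t with haa
    have hapos : 0 < a := lt_of_lt_of_le (by nlinarith) hA
    have haup : a ≤ 1 := by
      have h1 := sig_lt_one (γ := γ) (x := (0:ℝ)) hr
      rw [haa]; linarith
    clear_value a
    set m := min 1 (2 * a / γ) with hm
    have hm0 : 0 < m := lt_min one_pos (by positivity)
    have hm1 : m ≤ 1 := min_le_left _ _
    have hm2 : m ≤ 2 * a / γ := min_le_right _ _
    have hml : γ * m / 4 ≤ a / 2 := by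
      rw [div_le_div_iff₀ (by norm_num : (0:ℝ) < 4) (by norm_num : (0:ℝ) < 2)]
      calc γ * m * 2 ≤ γ * (2 * a / γ) * 2 := by nlinarith
        _ = a * 4 := by field_simp; ring
    clear_value m
    have hptw : ∀ x ∈ Set.Icc (0:ℝ) m, (a/2)^2 ≤ (sig r γ x - t)^2 := by
      intro x hx
      have hlip := sig_lip_left hr hγ hx.1
      have hxm : γ * x / 4 ≤ γ * m / 4 := by
        have := hx.2; nlinarith
      have hlow : a / 2 ≤ sig r γ x - t := by
        rw [haa] at *; linarith
      have h0 : (0:ℝ) ≤ a / 2 := by positivity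
      nlinarith
    have hsplit : V = (∫ x in (0:ℝ)..m, (sig r γ x - t)^2)
        + ∫ x in m..1, (sig r γ x - t)^2 := by
      rw [hV, ← intervalIntegral.integral_add_adjacent_intervals
        (hcont2.intervalIntegrable 0 m) (hcont2.intervalIntegrable m 1)]
    have hleft : m * (a/2)^2 ≤ ∫ x in (0:ℝ)..m, (sig r γ x - t)^2 := by
      have := intervalIntegral.integral_mono_on hm0.le
        (_root_.intervalIntegrable_const (c := (a/2)^2) (μ := MeasureTheory.volume)) (hcont2.intervalIntegrable 0 m) hptw
      simpa using this
    have hright : 0 ≤ ∫ x in m..1, (sig r γ x - t)^2 :=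
      intervalIntegral.integral_nonneg hm1 (fun x _ => sq_nonneg _)
    have hmain : m * (a/2)^2 ≤ V := by rw [hsplit]; linarith
    rw [hm] at hmain
    exact final a hA haup hmain
  · -- mass near the right endpoint
    set b := t - sig r γ 1 with hbb
    have hB : d / 2 ≤ b := by
      have : sig r γ 0 - t + b = d := by rw [hbb, hdd]; ring
      linarith
    have hbpos : 0 < b := lt_of_lt_of_le (by nlinarith) hB
    have hbup : b ≤ 1 := by
      have h1 := sig_pos (γ := γ) (x := (1:ℝ)) hr
      rw [hbb]; linarith
    clear_value b
    set m := min 1 (2 * b / γ) with hm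
    have hm0 : 0 < m := lt_min one_pos (by positivity)
    have hm1 : m ≤ 1 := min_le_left _ _
    have hm2 : m ≤ 2 * b / γ := min_le_right _ _
    have hml : γ * m / 4 ≤ b / 2 := by
      rw [div_le_div_iff₀ (by norm_num : (0:ℝ) < 4) (by norm_num : (0:ℝ) < 2)]
      calc γ * m * 2 ≤ γ * (2 * b / γ) * 2 := by nlinarith
        _ = b * 4 := by field_simp; ring
    clear_value m
    have hptw : ∀ x ∈ Set.Icc (1 - m) 1, (b/2)^2 ≤ (sig r γ x - t)^2 := by
      intro x hx
      have hlip := sig_lip_right hr hγ hx.2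
      have hxm : γ * (1 - x) / 4 ≤ γ * m / 4 := by
        have := hx.1; nlinarith
      have hlow : b / 2 ≤ t - sig r γ x := by
        rw [hbb] at *; linarith
      have h0 : (0:ℝ) ≤ b / 2 := by positivity
      nlinarith
    have hsplit : V = (∫ x in (0:ℝ)..(1-m), (sig r γ x - t)^2)
        + ∫ x in (1-m)..1, (sig r γ x - t)^2 := by
      rw [hV, ← intervalIntegral.integral_add_adjacent_intervals
        (hcont2.intervalIntegrable 0 (1-m)) (hcont2.intervalIntegrable (1-m) 1)]
    have hleft : 0 ≤ ∫ x in (0:ℝ)..(1-m), (sig r γ x - t)^2 :=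
      intervalIntegral.integral_nonneg (by linarith) (fun x _ => sq_nonneg _)
    have hrightlb : m * (b/2)^2 ≤ ∫ x in (1-m)..1, (sig r γ x - t)^2 := by
      have := intervalIntegral.integral_mono_on (by linarith : (1:ℝ) - m ≤ 1)
        (_root_.intervalIntegrable_const (c := (b/2)^2) (μ := MeasureTheory.volume)) (hcont2.intervalIntegrable (1-m) 1) hptw
      simpa using this
    have hmain : m * (b/2)^2 ≤ V := by
      rw [hsplit]
      have : (1 - (1 - m)) * (b/2)^2 = m * (b/2)^2 := by ring
      linarith
    rw [hm] at hmain
    exact final b hB hbup hmain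

end var

@[fun_prop]
lemma binEnt_cont : Continuous binEnt := by
  have : binEnt = Real.binEntropy := funext binEnt_eq
  rw [this]; exact Real.binEntropy_continuous

lemma binEnt_le_log_two (t : ℝ) : binEnt t ≤ Real.log 2 := by
  rw [binEnt_eq]; exact Real.binEntropy_le_log_two

lemma binEnt_symm (t : ℝ) : binEnt (1 - t) = binEnt t := by
  simp [binEnt]; ring

lemma neg_mul_log_le {t : ℝ} (ht0 : 0 < t) (ht1 : t ≤ 1) : -t * Real.log t ≤ 2 * Real.sqrt t := by
  have hs : 0 < Real.sqrt t := Real.sqrt_pos.2 ht0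
  have h1 : Real.log (1 / Real.sqrt t) ≤ 1 / Real.sqrt t - 1 :=
    Real.log_le_sub_one_of_pos (by positivity)
  have h2 : Real.log (1 / Real.sqrt t) = -(1/2) * Real.log t := by
    rw [Real.log_div one_ne_zero hs.ne', Real.log_one, Real.log_sqrt ht0.le]; ring
  rw [h2] at h1
  have h3 : -t * Real.log t = 2 * t * (-(1/2) * Real.log t) := by ring
  rw [h3]
  have h4 : 2 * t * (-(1/2) * Real.log t) ≤ 2 * t * (1 / Real.sqrt t - 1) := by
    apply mul_le_mul_of_nonneg_left h1 (by positivity)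
  refine le_trans h4 ?_
  have h5 : t / Real.sqrt t = Real.sqrt t := by
    rw [eq_comm, eq_div_iff hs.ne', Real.mul_self_sqrt ht0.le]
  have h6 : 2 * t * (1 / Real.sqrt t - 1) = 2 * (t / Real.sqrt t) - 2 * t := by ring
  rw [h6, h5]
  nlinarith [ht0]

lemma binEnt_le_3sqrt {t : ℝ} (ht0 : 0 < t) (ht1 : t < 1) : binEnt t ≤ 3 * Real.sqrt t := by
  have h1 : -t * Real.log t ≤ 2 * Real.sqrt t := neg_mul_log_le ht0 ht1.le
  have h2 : -(1 - t) * Real.log (1 - t) ≤ t := by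
    have h1t0 : (0:ℝ) < 1 - t := by linarith
    have hl : Real.log (1 / (1 - t)) ≤ 1 / (1 - t) - 1 :=
      Real.log_le_sub_one_of_pos (by positivity)
    have he : Real.log (1 / (1 - t)) = -Real.log (1 - t) := by
      rw [Real.log_div one_ne_zero (by linarith), Real.log_one]; ring
    rw [he] at hl
    have h1t : (0:ℝ) < 1 - t := by linarith
    have : (1 - t) * (-Real.log (1 - t)) ≤ (1 - t) * (1 / (1 - t) - 1) :=
      mul_le_mul_of_nonneg_left hl h1t.le
    have he2 : (1 - t) * (1 / (1 - t) - 1) = t := by field_simp; ring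
    nlinarith [this]
  have h3 : t ≤ Real.sqrt t := by
    nth_rewrite 1 [← Real.sq_sqrt ht0.le]
    nlinarith [Real.sqrt_pos.2 ht0, Real.sqrt_le_one.mpr ht1.le]
  rw [binEnt]
  linarith

lemma binEnt_le_5sqrt {t : ℝ} (ht0 : 0 < t) (ht1 : t < 1) :
    binEnt t ≤ 5 * Real.sqrt (t * (1 - t)) := by
  rcases le_total t (1/2) with h | h
  · have key := binEnt_le_3sqrt ht0 ht1
    have h1 : Real.sqrt t ≤ Real.sqrt (2 * (t * (1 - t))) := by
      apply Real.sqrt_le_sqrt; nlinarith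
    have h2 : Real.sqrt (2 * (t * (1 - t))) = Real.sqrt 2 * Real.sqrt (t * (1 - t)) :=
      Real.sqrt_mul (by norm_num) _
    have h3 : Real.sqrt 2 ≤ 3/2 := by
      rw [show (3:ℝ)/2 = Real.sqrt ((3/2)^2) from (Real.sqrt_sq (by norm_num)).symm]
      apply Real.sqrt_le_sqrt; norm_num
    have h4 : (0:ℝ) ≤ Real.sqrt (t * (1 - t)) := Real.sqrt_nonneg _
    nlinarith
  · have ht0' : 0 < 1 - t := by linarith
    have key := binEnt_le_3sqrt ht0' (by linarith)
    rw [binEnt_symm] at key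
    have h1 : Real.sqrt (1 - t) ≤ Real.sqrt (2 * (t * (1 - t))) := by
      apply Real.sqrt_le_sqrt; nlinarith
    have h2 : Real.sqrt (2 * (t * (1 - t))) = Real.sqrt 2 * Real.sqrt (t * (1 - t)) :=
      Real.sqrt_mul (by norm_num) _
    have h3 : Real.sqrt 2 ≤ 3/2 := by
      rw [show (3:ℝ)/2 = Real.sqrt ((3/2)^2) from (Real.sqrt_sq (by norm_num)).symm]
      apply Real.sqrt_le_sqrt; norm_num
    have h4 : (0:ℝ) ≤ Real.sqrt (t * (1 - t)) := Real.sqrt_nonneg _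
    nlinarith

section Jlem
variable {r γ : ℝ}

lemma mean_mem (hr : 0 < r) (hγ : 0 < γ) :
    (∫ x in (0:ℝ)..1, sig r γ x) ∈ Set.Ioo (0:ℝ) 1 :=
  ⟨lt_of_lt_of_le (sig_pos hr) (le_sig_mean hr hγ),
   lt_of_le_of_lt (sig_mean_le hr hγ) (sig_lt_one hr)⟩

lemma intble_binEnt_sig (hr : 0 < r) (a b : ℝ) :
    IntervalIntegrable (fun x => binEnt (sig r γ x)) MeasureTheory.volume a b :=
  (binEnt_cont.comp (sig_cont hr)).intervalIntegrable a b

lemma intble_x_sig (hr : 0 < r) (a b : ℝ) :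
    IntervalIntegrable (fun x => x * sig r γ x) MeasureTheory.volume a b :=
  (continuous_id.mul (sig_cont hr)).intervalIntegrable a b

lemma integral_decomp (hr : 0 < r) (c κ : ℝ) :
    ∫ x in (0:ℝ)..1, (c * sig r γ x + (binEnt (sig r γ x) - κ * (x * sig r γ x)))
      = c * (∫ x in (0:ℝ)..1, sig r γ x) + ((∫ x in (0:ℝ)..1, binEnt (sig r γ x))
        - κ * ∫ x in (0:ℝ)..1, x * sig r γ x) := by
  have hs := sig_cont (γ := γ) hr
  have ia : IntervalIntegrable (fun x => c * sig r γ x) MeasureTheory.volume 0 1 :=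
    Continuous.intervalIntegrable (by fun_prop) 0 1
  have ib : IntervalIntegrable (fun x => binEnt (sig r γ x) - κ * (x * sig r γ x))
      MeasureTheory.volume 0 1 := Continuous.intervalIntegrable (by fun_prop) 0 1
  have ic : IntervalIntegrable (fun x => κ * (x * sig r γ x)) MeasureTheory.volume 0 1 :=
    Continuous.intervalIntegrable (by fun_prop) 0 1
  rw [intervalIntegral.integral_add ia ib,
    intervalIntegral.integral_sub (intble_binEnt_sig hr 0 1) ic,
    intervalIntegral.integral_const_mul, intervalIntegral.integral_const_mul]

/-- Pointwise Fenchel–Young identity for the integrand of `Jint`. -/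
lemma J_pointwise (hr : 0 < r) (x : ℝ) :
    Real.log (1 + r * exp (-γ * x))
      = Real.log r * sig r γ x + (binEnt (sig r γ x) - γ * (x * sig r γ x)) := by
  have hy : (0:ℝ) < r * exp (-γ * x) := by positivity
  have h := FY_eq hy
  have hsig : r * exp (-γ * x) / (1 + r * exp (-γ * x)) = sig r γ x := rfl
  rw [hsig] at h
  rw [← h, Real.log_mul hr.ne' (exp_ne_zero _), Real.log_exp]
  ring

lemma J_eq (hr : 0 < r) (hγ : 0 < γ) :
    Jint r γ = Real.log r * (∫ x in (0:ℝ)..1, sig r γ x)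
      + ((∫ x in (0:ℝ)..1, binEnt (sig r γ x)) - γ * ∫ x in (0:ℝ)..1, x * sig r γ x) := by
  rw [Jint, ← integral_decomp hr (Real.log r) γ]
  apply intervalIntegral.integral_congr
  intro x _
  exact J_pointwise hr x

/-- Weak duality: for any fugacity `r`, `Jint r β` dominates the value of the profile `sig 1 γ`. -/
lemma J_ge_prof {β : ℝ} (hr : 0 < r) (hβ : 0 < β) (hγ : 0 < γ) :
    Real.log r * (∫ x in (0:ℝ)..1, sig 1 γ x) + ((∫ x in (0:ℝ)..1, binEnt (sig 1 γ x))
      - β * ∫ x in (0:ℝ)..1, x * sig 1 γ x) ≤ Jint r β := by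
  rw [← integral_decomp one_pos (Real.log r) β, Jint]
  apply intervalIntegral.integral_mono_on (by norm_num)
  · apply Continuous.intervalIntegrable
    have h1 := sig_cont (γ := γ) one_pos
    fun_prop
  · apply Continuous.intervalIntegrable
    exact Continuous.log (by fun_prop) (fun x => (w_pos (γ := β) (x := x) hr).ne')
  · intro x _
    have hq0 := sig_pos (γ := γ) (x := x) one_pos
    have hq1 := sig_lt_one (γ := γ) (x := x) one_pos
    have hy : (0:ℝ) < r * exp (-β * x) := by positivity
    have h := FY_le hq0 hq1 hy
    rw [Real.log_mul hr.ne' (exp_ne_zero _), Real.log_exp] at h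
    calc Real.log r * sig 1 γ x + (binEnt (sig 1 γ x) - β * (x * sig 1 γ x))
        = sig 1 γ x * (Real.log r + -β * x) + binEnt (sig 1 γ x) := by ring
      _ ≤ Real.log (1 + r * exp (-β * x)) := h

/-- Integrated Pinsker inequality. -/
lemma integral_binEnt_le (hr : 0 < r) (hγ : 0 < γ) :
    (∫ x in (0:ℝ)..1, binEnt (sig r γ x))
      ≤ binEnt (∫ x in (0:ℝ)..1, sig r γ x)
        - 2 * ∫ x in (0:ℝ)..1, (sig r γ x - ∫ y in (0:ℝ)..1, sig r γ y)^2 := by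
  set t := ∫ y in (0:ℝ)..1, sig r γ y with htdef
  obtain ⟨ht0, ht1⟩ := mean_mem hr hγ
  have hptw : ∀ x ∈ Set.Icc (0:ℝ) 1, binEnt (sig r γ x)
      ≤ binEnt t + (Real.log (1 - t) - Real.log t) * (sig r γ x - t) - 2 * (sig r γ x - t)^2 :=
    fun x _ => pinsker (sig_pos hr) (sig_lt_one hr) ht0 ht1
  have hle := intervalIntegral.integral_mono_on (by norm_num : (0:ℝ) ≤ 1)
    (intble_binEnt_sig hr 0 1)
    (by
      apply Continuous.intervalIntegrable
      have := sig_cont (γ := γ) hr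
      fun_prop) hptw
  refine le_trans hle ?_
  have i1 : IntervalIntegrable (fun x => binEnt t + (Real.log (1 - t) - Real.log t) * (sig r γ x - t))
      MeasureTheory.volume 0 1 := by
    apply Continuous.intervalIntegrable
    have := sig_cont (γ := γ) hr
    fun_prop
  have i2 : IntervalIntegrable (fun x => 2 * (sig r γ x - t)^2) MeasureTheory.volume 0 1 := by
    apply Continuous.intervalIntegrable
    have := sig_cont (γ := γ) hr
    fun_prop
  have split : (∫ x in (0:ℝ)..1, (binEnt t + (Real.log (1 - t) - Real.log t) * (sig r γ x - t)
        - 2 * (sig r γ x - t)^2))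
      = (∫ x in (0:ℝ)..1, (binEnt t + (Real.log (1 - t) - Real.log t) * (sig r γ x - t)))
        - ∫ x in (0:ℝ)..1, 2 * (sig r γ x - t)^2 := intervalIntegral.integral_sub i1 i2
  rw [split]
  have e1 : (∫ x in (0:ℝ)..1, (binEnt t + (Real.log (1 - t) - Real.log t) * (sig r γ x - t)))
      = binEnt t := by
    rw [intervalIntegral.integral_add intervalIntegrable_const
      (show IntervalIntegrable (fun x => (Real.log (1 - t) - Real.log t) * (sig r γ x - t)) MeasureTheory.volume 0 1 from
        (continuous_const.mul ((sig_cont hr).sub continuous_const)).intervalIntegrable 0 1),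
      intervalIntegral.integral_const_mul,
      intervalIntegral.integral_sub (sig_intble hr 0 1) intervalIntegrable_const]
    simp [← htdef]
  rw [e1, intervalIntegral.integral_const_mul]

lemma integral_x_sig_nonneg (hr : 0 < r) : 0 ≤ ∫ x in (0:ℝ)..1, x * sig r γ x :=
  intervalIntegral.integral_nonneg (by norm_num)
    (fun x hx => mul_nonneg hx.1 (sig_pos hr).le)

lemma Jint_pos (hγ : 0 < γ) : 0 < Jint 1 γ := by
  have hlb : ∀ x ∈ Set.Icc (0:ℝ) 1, Real.log (1 + exp (-γ)) ≤ Real.log (1 + 1 * exp (-γ * x)) := by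
    intro x hx
    apply Real.log_le_log (by positivity)
    have : exp (-γ) ≤ exp (-γ * x) := by
      apply Real.exp_le_exp.2
      nlinarith [hx.1, hx.2]
    linarith
  have h := intervalIntegral.integral_mono_on (by norm_num : (0:ℝ) ≤ 1)
    (_root_.intervalIntegrable_const (c := Real.log (1 + exp (-γ))) (μ := MeasureTheory.volume))
    (by
      apply Continuous.intervalIntegrable
      exact Continuous.log (by fun_prop) (fun x => (w_pos (γ := γ) (x := x) one_pos).ne')) hlb
  rw [Jint]
  have hpos : 0 < Real.log (1 + exp (-γ)) := Real.log_pos (by nlinarith [exp_pos (-γ)])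
  simp only [intervalIntegral.integral_const, sub_zero, one_smul] at h
  linarith

end Jlem

lemma rtβ_pos {t β : ℝ} (hβ : 0 < β) (ht0 : 0 < t) (ht1 : t < 1) : 0 < rtβ t β := by
  rw [rtβ]
  apply div_pos
  · have : (1:ℝ) < exp (β * t) := Real.one_lt_exp_iff.2 (by nlinarith)
    linarith
  · have : exp (β * (t - 1)) < 1 := Real.exp_lt_one_iff.2 (by nlinarith)
    linarith

lemma integral_sig_rtβ {t β : ℝ} (hβ : 0 < β) (ht0 : 0 < t) (ht1 : t < 1) :
    ∫ x in (0:ℝ)..1, sig (rtβ t β) β x = t := by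
  have hR := rtβ_pos hβ ht0 ht1
  rw [integral_sig hR hβ]
  have hE1 : (1:ℝ) < exp (β * t) := Real.one_lt_exp_iff.2 (by nlinarith)
  have hE2 : exp (β * (t - 1)) < 1 := Real.exp_lt_one_iff.2 (by nlinarith)
  have hEm : exp (-β) < 1 := Real.exp_lt_one_iff.2 (by linarith)
  have hrel : exp (β * (t - 1)) = exp (β * t) * exp (-β) := by
    rw [← Real.exp_add]; congr 1; ring
  have hd1 : (0:ℝ) < 1 - exp (β * (t - 1)) := by linarith
  have hd1' : 1 - exp (β * t) * exp (-β) ≠ 0 := by rw [← hrel]; exact hd1.ne'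
  have hd2 : (0:ℝ) < 1 - exp (-β) := by linarith
  have h1 : 1 + rtβ t β = (exp (β * t) - exp (β * (t - 1))) / (1 - exp (β * (t - 1))) := by
    rw [rtβ]; field_simp; ring
  have h2 : 1 + rtβ t β * exp (-β) = (1 - exp (-β)) / (1 - exp (β * (t - 1))) := by
    rw [rtβ, hrel]
    field_simp
    ring
  have hnum : exp (β * t) - exp (β * (t - 1)) = exp (β * t) * (1 - exp (-β)) := by
    rw [hrel]; ring
  have hnumpos : (0:ℝ) < exp (β * t) - exp (β * (t - 1)) := by
    rw [hnum]; positivity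
  rw [h1, h2]
  rw [Real.log_div hnumpos.ne' hd1.ne', Real.log_div hd2.ne' hd1.ne', hnum,
    Real.log_mul (by positivity) hd2.ne', Real.log_exp]
  field_simp
  ring

/-- General weak-duality: any Fermi profile bounds `Jint R γ` from below. -/
lemma J_ge_gen {R γ r' γ' : ℝ} (hR : 0 < R) (hγ' : 0 < r') :
    Real.log R * (∫ x in (0:ℝ)..1, sig r' γ' x) + ((∫ x in (0:ℝ)..1, binEnt (sig r' γ' x))
      - γ * ∫ x in (0:ℝ)..1, x * sig r' γ' x) ≤ Jint R γ := by
  rw [← integral_decomp hγ' (Real.log R) γ, Jint]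
  apply intervalIntegral.integral_mono_on (by norm_num)
  · apply Continuous.intervalIntegrable
    have h1 := sig_cont (γ := γ') hγ'
    fun_prop
  · apply Continuous.intervalIntegrable
    exact Continuous.log (by fun_prop) (fun x => (w_pos (γ := γ) (x := x) hR).ne')
  · intro x _
    have hq0 := sig_pos (γ := γ') (x := x) hγ'
    have hq1 := sig_lt_one (γ := γ') (x := x) hγ'
    have hy : (0:ℝ) < R * exp (-γ * x) := by positivity
    have h := FY_le hq0 hq1 hy
    rw [Real.log_mul hR.ne' (exp_ne_zero _), Real.log_exp] at h
    calc Real.log R * sig r' γ' x + (binEnt (sig r' γ' x) - γ * (x * sig r' γ' x))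
        = sig r' γ' x * (Real.log R + -γ * x) + binEnt (sig r' γ' x) := by ring
      _ ≤ Real.log (1 + R * exp (-γ * x)) := h

lemma IE_le {r γ : ℝ} (hr : 0 < r) (hγ : 0 < γ) :
    (∫ x in (0:ℝ)..1, binEnt (sig r γ x))
      ≤ binEnt (∫ x in (0:ℝ)..1, sig r γ x)
        - 2 * min ((∫ x in (0:ℝ)..1, sig r γ x) * (1 - ∫ x in (0:ℝ)..1, sig r γ x) / 2)
          (γ^3 * ((∫ x in (0:ℝ)..1, sig r γ x) * (1 - ∫ x in (0:ℝ)..1, sig r γ x))^3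
            / (128 * (γ + 2))) := by
  have h1 := integral_binEnt_le hr hγ
  have h2 := var_lower hr hγ
  linarith

lemma K_eq {β t : ℝ} (hβ : 0 < β) (ht0 : 0 < t) (ht1 : t < 1) :
    Jint (rtβ t β) β - t * Real.log (rtβ t β)
      = (∫ x in (0:ℝ)..1, binEnt (sig (rtβ t β) β x))
        - β * ∫ x in (0:ℝ)..1, x * sig (rtβ t β) β x := by
  have hJ := J_eq (rtβ_pos hβ ht0 ht1) hβ
  rw [integral_sig_rtβ hβ ht0 ht1] at hJ
  rw [hJ]; ring

/-- Uniform upper bound used for `BddAbove` and part (B). -/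
lemma F_le_ent {β t α : ℝ} (hβ : 0 < β) (ht0 : 0 < t) (ht1 : t < 1) :
    α * binEnt t + Jint (rtβ t β) β - t * Real.log (rtβ t β) ≤ (1 + α) * binEnt t := by
  have hR := rtβ_pos hβ ht0 ht1
  have hK := K_eq hβ ht0 ht1
  have hIE := IE_le hR hβ
  rw [integral_sig_rtβ hβ ht0 ht1] at hIE
  have hIX := integral_x_sig_nonneg (γ := β) (r := rtβ t β) hR
  have hM : (0:ℝ) ≤ min (t * (1 - t) / 2) (β^3 * (t * (1 - t))^3 / (128 * (β + 2))) := by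
    apply le_min
    · nlinarith
    · have hs : (0:ℝ) ≤ t * (1 - t) := by nlinarith
      positivity
  nlinarith [mul_nonneg hβ.le hIX]

/-- Part (B) key bound. -/
lemma F_le_N {β t α : ℝ} (hβ : 0 < β) (ht0 : 0 < t) (ht1 : t < 1)
    (hα0 : -1 < α) (hα1 : α < 0) :
    α * binEnt t + Jint (rtβ t β) β - t * Real.log (rtβ t β)
      ≤ (1 + α) * Jint 1 (β / (1 + α))
        - (-α) * (2 * min (t * (1 - t) / 2) (β^3 * (t * (1 - t))^3 / (128 * (β + 2)))) := by
  have hc : (0:ℝ) < 1 + α := by linarith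
  have hγ : (0:ℝ) < β / (1 + α) := by positivity
  have hR := rtβ_pos hβ ht0 ht1
  have hK := K_eq hβ ht0 ht1
  set IE := ∫ x in (0:ℝ)..1, binEnt (sig (rtβ t β) β x) with hIEdef
  set IX := ∫ x in (0:ℝ)..1, x * sig (rtβ t β) β x with hIXdef
  -- N ≥ (1+α) IE - β IX
  have hdual := J_ge_gen (R := 1) (γ := β / (1 + α)) (r' := rtβ t β) (γ' := β) one_pos hR
  rw [Real.log_one, zero_mul, zero_add, ← hIEdef, ← hIXdef] at hdual
  have hN : (1 + α) * (IE - β / (1 + α) * IX) ≤ (1 + α) * Jint 1 (β / (1 + α)) :=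
    mul_le_mul_of_nonneg_left hdual hc.le
  have hexp : (1 + α) * (IE - β / (1 + α) * IX) = (1 + α) * IE - β * IX := by
    field_simp
  rw [hexp] at hN
  -- Pinsker
  have hIE := IE_le hR hβ
  rw [integral_sig_rtβ hβ ht0 ht1, ← hIEdef] at hIE
  set M := min (t * (1 - t) / 2) (β^3 * (t * (1 - t))^3 / (128 * (β + 2))) with hMdef
  -- combine : F = α h(t) + IE - β IX ≤ N - (-α) 2 M
  have hmul : (-α) * (2 * M) ≤ (-α) * (binEnt t - IE) := by
    apply mul_le_mul_of_nonneg_left (by linarith) (by linarith)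
  linarith

/-- Part (A): a witness `t` beating `Λ_N`. -/
lemma partA {β α : ℝ} (hβ : 0 < β) (hα : 0 < α) :
    ∃ t : ℝ, t ∈ Set.Ioo (0:ℝ) 1 ∧ (1 + α) * Jint 1 (β / (1 + α))
      < α * binEnt t + Jint (rtβ t β) β - t * Real.log (rtβ t β) := by
  have hc : (0:ℝ) < 1 + α := by linarith
  set γ := β / (1 + α) with hγdef
  have hγ : (0:ℝ) < γ := by positivity
  set t := ∫ x in (0:ℝ)..1, sig 1 γ x with htdef
  obtain ⟨ht0, ht1⟩ := mean_mem (γ := γ) one_pos hγ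
  rw [← htdef] at ht0 ht1
  refine ⟨t, ⟨ht0, ht1⟩, ?_⟩
  have hR := rtβ_pos hβ ht0 ht1
  set IE := ∫ x in (0:ℝ)..1, binEnt (sig 1 γ x) with hIEdef
  set IX := ∫ x in (0:ℝ)..1, x * sig 1 γ x with hIXdef
  -- N = (1+α) IE - β IX
  have hNeq := J_eq (γ := γ) one_pos hγ
  rw [Real.log_one, zero_mul, zero_add, ← hIEdef, ← hIXdef] at hNeq
  have hNeq2 : (1 + α) * Jint 1 γ = (1 + α) * IE - β * IX := by
    rw [hNeq, hγdef]
    have hc' : (1:ℝ) + α ≠ 0 := hc.ne'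
    field_simp
  -- F(t) ≥ α binEnt t + IE - β IX
  have hdual := J_ge_gen (R := rtβ t β) (γ := β) (r' := 1) (γ' := γ) hR one_pos
  rw [← htdef, ← hIEdef, ← hIXdef] at hdual
  -- Pinsker strict gap
  have hIE := IE_le (γ := γ) one_pos hγ
  rw [← htdef, ← hIEdef] at hIE
  set M := min (t * (1 - t) / 2) (γ^3 * (t * (1 - t))^3 / (128 * (γ + 2))) with hMdef
  have hMpos : 0 < M := by
    apply lt_min
    · nlinarith
    · have hs : 0 < t * (1 - t) := by nlinarith
      positivity
  have hgap : 0 < α * (2 * M) := by positivity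
  have hmul : α * (2 * M) ≤ α * (binEnt t - IE) :=
    mul_le_mul_of_nonneg_left (by linarith) hα.le
  linarith


theorem scgf_order (β : ℝ) (hβ : 0 < β) :
    (∀ α : ℝ, 0 < α →
      (⨆ t : Set.Ioo (0:ℝ) 1,
          (α * binEnt t + Jint (rtβ t β) β - (t : ℝ) * Real.log (rtβ t β)))
        > (1 + α) * Jint 1 (β / (1 + α))) ∧
    (∀ α : ℝ, α ∈ Set.Ioo (-1:ℝ) 0 →
      (⨆ t : Set.Ioo (0:ℝ) 1,
          (α * binEnt t + Jint (rtβ t β) β - (t : ℝ) * Real.log (rtβ t β)))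
        < (1 + α) * Jint 1 (β / (1 + α))) := by
  haveI : Nonempty (Set.Ioo (0:ℝ) 1) := ⟨⟨1/2, by norm_num⟩⟩
  constructor
  · intro α hα
    obtain ⟨t, ht, hlt⟩ := partA hβ hα
    have hBdd : BddAbove (Set.range (fun t : Set.Ioo (0:ℝ) 1 =>
        α * binEnt t + Jint (rtβ t β) β - (t:ℝ) * Real.log (rtβ t β))) := by
      refine ⟨(1+α) * Real.log 2, ?_⟩
      rintro y ⟨⟨u, hu⟩, rfl⟩
      have h1 := F_le_ent (α := α) hβ hu.1 hu.2
      have h2 : (1+α) * binEnt u ≤ (1+α) * Real.log 2 :=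
        mul_le_mul_of_nonneg_left (binEnt_le_log_two u) (by linarith)
      exact le_trans h1 h2
    exact lt_of_lt_of_le hlt (le_ciSup hBdd ⟨t, ht⟩)
  · rintro α ⟨hα0, hα1⟩
    have hc : (0:ℝ) < 1 + α := by linarith
    have hγ : (0:ℝ) < β / (1+α) := by positivity
    set N := (1 + α) * Jint 1 (β / (1 + α)) with hNdef
    have hNpos : 0 < N := mul_pos hc (Jint_pos hγ)
    set sh := min (1/4 : ℝ) ((N / (10 * (1 + α)))^2) with hshdef
    have hsh0 : 0 < sh := lt_min (by norm_num) (by positivity)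
    set Mh := min (sh / 2) (β^3 * sh^3 / (128 * (β + 2))) with hMhdef
    have hMh0 : 0 < Mh := lt_min (by positivity) (by positivity)
    set δ := min (N / 2) ((-α) * (2 * Mh)) with hδdef
    have hδ0 : 0 < δ := lt_min (by positivity) (mul_pos (by linarith) (by positivity))
    have key : ∀ u : Set.Ioo (0:ℝ) 1,
        α * binEnt (u:ℝ) + Jint (rtβ (u:ℝ) β) β - (u:ℝ) * Real.log (rtβ (u:ℝ) β) ≤ N - δ := by
      rintro ⟨u, hu0, hu1⟩
      show α * binEnt u + Jint (rtβ u β) β - u * Real.log (rtβ u β) ≤ N - δ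
      have hs0 : 0 < u * (1 - u) := by nlinarith
      rcases le_or_gt (u * (1 - u)) sh with hcs | hcs
      · have h1 := F_le_ent (α := α) hβ hu0 hu1
        have h2 : binEnt u ≤ 5 * Real.sqrt (u * (1 - u)) := binEnt_le_5sqrt hu0 hu1
        have h3 : Real.sqrt (u * (1 - u)) ≤ Real.sqrt sh := Real.sqrt_le_sqrt hcs
        have h4 : Real.sqrt sh ≤ N / (10 * (1 + α)) := by
          have hle : sh ≤ (N / (10 * (1 + α)))^2 := min_le_right _ _
          calc Real.sqrt sh ≤ Real.sqrt ((N / (10 * (1 + α)))^2) := Real.sqrt_le_sqrt hle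
            _ = N / (10 * (1 + α)) := Real.sqrt_sq (by positivity)
        have h5 : (1 + α) * binEnt u ≤ (1 + α) * (5 * (N / (10 * (1 + α)))) :=
          mul_le_mul_of_nonneg_left (by linarith) hc.le
        have h6 : (1 + α) * (5 * (N / (10 * (1 + α)))) = N / 2 := by
          field_simp
          ring
        have h7 : δ ≤ N/2 := min_le_left _ _
        linarith
      · have hkey := F_le_N hβ hu0 hu1 hα0 hα1
        rw [← hNdef] at hkey
        have hMmono : Mh ≤ min (u * (1 - u) / 2) (β^3 * (u * (1 - u))^3 / (128 * (β + 2))) := by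
          apply le_min
          · calc Mh ≤ sh/2 := min_le_left _ _
              _ ≤ u * (1 - u)/2 := by linarith
          · calc Mh ≤ β^3 * sh^3/(128*(β+2)) := min_le_right _ _
              _ ≤ β^3 * (u * (1 - u))^3/(128*(β+2)) := by gcongr
        have hδ2 : δ ≤ (-α) * (2 * Mh) := min_le_right _ _
        have hmono2 : (-α) * (2 * Mh)
            ≤ (-α) * (2 * min (u * (1 - u) / 2) (β^3 * (u * (1 - u))^3 / (128 * (β + 2)))) :=
          mul_le_mul_of_nonneg_left (by linarith) (by linarith)
        linarith
    have hsup := ciSup_le key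
    exact lt_of_le_of_lt hsup (by linarith)
end
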